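/- arXiv:2502.06449 — 6 statements merged into one kernel-verified Lean document; each statement's English description precedes it below -/
import Mathlib

section
/- The theta function θ_Δ(τ) = (1/2) ∑_{n ∈ 1/2+ℤ} q^{n²/4} (with q = e^{2πiτ}, τ in the upper half-plane) equals the eta quotient η(τ)²/η(τ/2), where η is the Dedekind eta function. -/
set_option maxHeartbeats 1000000

open Complex Finset Filter

namespace JTPaux


noncomputable def D (q : ℂ) (k : ℕ) : ℂ := ∏ j ∈ Finset.range k, (1 - q ^ (2*j+2))

noncomputable def G (q : ℂ) (N j : ℕ) : ℂ := if j ≤ N then D q N / (D q j * D q (N-j)) else 0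

variable {q : ℂ}

lemma one_sub_ne (hq : ‖q‖ < 1) (j : ℕ) : (1 : ℂ) - q ^ (2*j+2) ≠ 0 := by
  have h : ‖q ^ (2*j+2)‖ < 1 := by
    rw [norm_pow]
    exact pow_lt_one₀ (norm_nonneg q) hq (by omega)
  intro h0
  have : q ^ (2*j+2) = 1 := by linear_combination -h0
  rw [this] at h; simp at h

lemma D_ne (hq : ‖q‖ < 1) (k : ℕ) : D q k ≠ 0 :=
  Finset.prod_ne_zero_iff.2 fun j _ => one_sub_ne hq j

lemma D_succ (q : ℂ) (k : ℕ) : D q (k+1) = D q k * (1 - q ^ (2*k+2)) := Finset.prod_range_succ _ _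

lemma G_zero (hq : ‖q‖ < 1) (N : ℕ) : G q N 0 = 1 := by
  simp only [G, Nat.zero_le, if_true, Nat.sub_zero]
  rw [show D q 0 = 1 by simp [D], one_mul]
  exact div_self (D_ne hq N)

lemma G_self (hq : ‖q‖ < 1) (N : ℕ) : G q N N = 1 := by
  simp only [G, le_refl, if_true, Nat.sub_self]
  rw [show D q 0 = 1 by simp [D], mul_one]
  exact div_self (D_ne hq N)

lemma G_of_gt {N j : ℕ} (h : N < j) : G q N j = 0 := by
  simp [G, Nat.not_le.2 h]

lemma pascal (hq : ‖q‖ < 1) (N j : ℕ) (hj : j ≤ N) :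
    G q (N+1) (j+1) = G q N (j+1) + q ^ (2*(N-j)) * G q N j := by
  rcases Nat.lt_or_ge j N with hlt | hge
  · obtain ⟨d, rfl⟩ : ∃ d, N = j + 1 + d := ⟨N - (j+1), by omega⟩
    have e1 : j + 1 + d + 1 - (j + 1) = d + 1 := by omega
    have e2 : j + 1 + d - (j + 1) = d := by omega
    have e3 : j + 1 + d - j = d + 1 := by omega
    simp only [G, e1, e2, e3, if_pos (by omega : j + 1 ≤ j + 1 + d + 1),
      if_pos (by omega : j + 1 ≤ j + 1 + d), if_pos (by omega : j ≤ j + 1 + d)]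
    rw [show j+1+d+1 = (j+1+d)+1 from rfl, D_succ q (j+1+d), D_succ q d, D_succ q j,
      show 2*(j+1+d)+2 = (2*j+2)+(2*d+2) by ring, pow_add]
    have hb := D_ne hq j
    have hc := D_ne hq d
    have ha := D_ne hq (j+1+d)
    have hβ := one_sub_ne hq j
    have hγ := one_sub_ne hq d
    field_simp
    ring
  · have hjN : j = N := le_antisymm hj hge
    subst hjN
    rw [G_self hq, G_of_gt (by omega), Nat.sub_self, pow_zero, G_self hq]
    simp

lemma qbinom (hq : ‖q‖ < 1) (N : ℕ) (y : ℂ) :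
    ∏ k ∈ Finset.range N, (1 + y * q ^ (2*k+1)) =
      ∑ j ∈ Finset.range (N+1), G q N j * q ^ (j^2) * y ^ j := by
  induction N with
  | zero => simp [G_zero hq]
  | succ N ih =>
    set f : ℕ → ℂ := fun j => G q N j * q ^ (j^2) * y ^ j with hf
    set F : ℕ → ℂ := fun j => G q (N+1) j * q ^ (j^2) * y ^ j with hF
    have h0f : f 0 = 1 := by simp [hf, G_zero hq]
    have h0F : F 0 = 1 := by simp [hF, G_zero hq]
    have hext : ∑ j ∈ Finset.range N, f (j+1) = ∑ j ∈ Finset.range (N+1), f (j+1) := by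
      rw [Finset.sum_range_succ]
      rw [show f (N+1) = 0 by simp [hf, G_of_gt (Nat.lt_succ_self N)]]
      ring
    rw [Finset.prod_range_succ, ih, Finset.sum_range_succ' F N.succ, h0F, mul_add, mul_one,
      Finset.sum_mul, Finset.sum_range_succ' f N, h0f, hext]
    rw [add_right_comm, ← Finset.sum_add_distrib]
    congr 1
    refine Finset.sum_congr rfl fun j hj => ?_
    rw [Finset.mem_range] at hj
    obtain ⟨d, hd⟩ : ∃ d, N = j + d := ⟨N-j, by omega⟩
    subst hd
    simp only [hf, hF]
    rw [pascal hq (j+d) j (by omega), show j + d - j = d by omega]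
    have hpow : q ^ (2*d) * q ^ ((j+1)^2) = q ^ (j^2) * q ^ (2*(j+d)+1) := by
      rw [← pow_add, ← pow_add]
      ring_nf
    linear_combination (G q (j+d) j * y^(j+1)) * hpow


lemma special (hq : ‖q‖ < 1) (hq0 : q ≠ 0) (n : ℕ) :
    ∑ j ∈ Finset.range (2*n+1), G q (2*n) j * q ^ (((j:ℤ)-n)^2 + ((j:ℤ)-n)) =
      (∏ i ∈ Finset.range n, (1 + q^(2*i))) * (∏ i ∈ Finset.range n, (1 + q^(2*i+2))) := by
  set y : ℂ := q ^ ((1:ℤ) - 2*n) with hy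
  have hqb := qbinom hq (2*n) y
  -- rewrite sum side
  have hsum : ∑ j ∈ Finset.range (2*n+1), G q (2*n) j * q ^ (((j:ℤ)-n)^2 + ((j:ℤ)-n))
      = q ^ ((n:ℤ)^2 - n) * ∑ j ∈ Finset.range (2*n+1), G q (2*n) j * q ^ (j^2) * y ^ j := by
    rw [Finset.mul_sum]
    refine Finset.sum_congr rfl fun j _ => ?_
    have : y ^ j = q ^ (((1:ℤ) - 2*n) * j) := by
      rw [hy, zpow_mul, zpow_natCast]
    rw [this, mul_comm (q ^ ((n:ℤ)^2 - n)), mul_assoc, mul_assoc]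
    congr 1
    rw [← zpow_natCast q (j^2), ← zpow_add₀ hq0, ← zpow_add₀ hq0]
    congr 1
    push_cast
    ring
  -- rewrite product side
  have hprod : (∏ k ∈ Finset.range (2*n), (1 + y * q ^ (2*k+1)))
      = q ^ (-((n:ℤ)^2 - n)) * ((∏ i ∈ Finset.range n, (1 + q^(2*i))) *
          (∏ i ∈ Finset.range n, (1 + q^(2*i+2)))) := by
    rw [show 2*n = n + n by ring, Finset.prod_range_add]
    have h2 : ∀ i ∈ Finset.range n, (1 + y * q ^ (2*(n+i)+1)) = 1 + q^(2*i+2) := by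
      intro i _
      congr 1
      rw [hy, show 2*(n+i)+1 = 2*n + (2*i+1) by ring, pow_add, ← zpow_natCast q (2*n),
        ← zpow_natCast q (2*i+1), ← zpow_add₀ hq0, ← zpow_add₀ hq0, ← zpow_natCast q (2*i+2)]
      congr 1
      push_cast
      ring
    rw [Finset.prod_congr rfl h2]
    have h1 : (∏ k ∈ Finset.range n, (1 + y * q ^ (2*k+1)))
        = ∏ j ∈ Finset.range n, (q ^ (-2*(j:ℤ)) * (1 + q ^ (2*j))) := by
      rw [← Finset.prod_range_reflect (fun k => 1 + y * q ^ (2*k+1)) n]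
      refine Finset.prod_congr rfl fun j hj => ?_
      rw [Finset.mem_range] at hj
      have key : y * q ^ (2*(n-1-j)+1) = q ^ (-2*(j:ℤ)) := by
        rw [hy, ← zpow_natCast q (2*(n-1-j)+1), ← zpow_add₀ hq0]
        congr 1
        omega
      rw [key]
      rw [mul_add, mul_one, ← zpow_natCast q (2*j), ← zpow_add₀ hq0]
      norm_num
      ring
    rw [h1, Finset.prod_mul_distrib]
    have h3 : (∏ j ∈ Finset.range n, q ^ (-2*(j:ℤ))) = q ^ (-((n:ℤ)^2 - n)) := by
      have hterm : ∀ j ∈ Finset.range n, q ^ (-2*(j:ℤ)) = (q ^ (2*j))⁻¹ := fun j _ => by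
        rw [show -2*(j:ℤ) = -(↑(2*j) : ℤ) by push_cast; ring, zpow_neg, zpow_natCast]
      have hs : (∑ j ∈ Finset.range n, 2*j) = n*(n-1) := by
        rw [← Finset.sum_range_id_mul_two n, Finset.sum_mul]
        exact Finset.sum_congr rfl fun j _ => by ring
      rw [Finset.prod_congr rfl hterm, Finset.prod_inv_distrib,
        Finset.prod_pow_eq_pow_sum, hs, zpow_neg, ← zpow_natCast q (n*(n-1))]
      congr 2
      rcases n with _ | m
      · simp
      · push_cast [Nat.succ_sub_one]
        ring
    rw [h3]
    ring
  rw [hsum, hqb.symm, hprod, ← mul_assoc, ← zpow_add₀ hq0]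
  norm_num

section limits
open Filter
lemma geo_summable (hq : ‖q‖ < 1) : Summable (fun n : ℕ => ‖q‖^(2*n+2)) := by
  have h2 : ‖q‖^2 < 1 := by
    nlinarith [norm_nonneg q]
  have := (summable_geometric_of_lt_one (by positivity) h2).mul_left (‖q‖^2)
  refine this.congr fun n => ?_
  rw [← pow_mul, ← pow_add]
  ring_nf

lemma log_summable (hq : ‖q‖ < 1) (v : ℕ → ℂ) (hv : ∀ n, ‖v n‖ ≤ ‖q‖^(2*n+2)) :
    Summable (fun n => Complex.log (1 + v n)) := by
  refine Summable.of_norm_bounded_eventually (g := fun n => 3/2 * ‖q‖^(2*n+2))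
    ((geo_summable hq).mul_left _) ?_
  rw [Nat.cofinite_eq_atTop]
  have htend : Tendsto (fun n : ℕ => ‖q‖^(2*n+2)) atTop (nhds 0) := by
    have h := tendsto_pow_atTop_nhds_zero_of_lt_one (norm_nonneg q) hq
    have := h.comp (Filter.tendsto_atTop_mono (fun n : ℕ => by omega : ∀ n : ℕ, n ≤ 2*n+2)
      tendsto_id)
    exact this
  filter_upwards [htend.eventually_le_const (by norm_num : (0:ℝ) < 1/2)] with n hn
  calc ‖Complex.log (1 + v n)‖ ≤ 3/2 * ‖v n‖ :=
        Complex.norm_log_one_add_half_le_self (le_trans (hv n) hn)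
    _ ≤ 3/2 * ‖q‖^(2*n+2) := by linarith [hv n]

lemma hasProd_aux (hq : ‖q‖ < 1) (v : ℕ → ℂ) (hv : ∀ n, ‖v n‖ ≤ ‖q‖^(2*n+2))
    (hne : ∀ n, (1:ℂ) + v n ≠ 0) :
    HasProd (fun n => 1 + v n) (∏' n, (1 + v n)) ∧ (∏' n, (1 + v n)) ≠ 0 := by
  have hs := log_summable hq v hv
  have h1 := (Complex.multipliable_of_summable_log hs).hasProd
  refine ⟨h1, ?_⟩
  have h2 := Complex.cexp_tsum_eq_tprod hne hs
  rw [← h2]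
  exact Complex.exp_ne_zero _

lemma hv_sub (hq : ‖q‖ < 1) : ∀ n : ℕ, ‖-(q^(2*n+2))‖ ≤ ‖q‖^(2*n+2) := fun n => by
  rw [norm_neg, norm_pow]

lemma hv_add (hq : ‖q‖ < 1) : ∀ n : ℕ, ‖(q^(2*n+2))‖ ≤ ‖q‖^(2*n+2) := fun n => by
  rw [norm_pow]

lemma one_add_ne (hq : ‖q‖ < 1) (j : ℕ) : (1 : ℂ) + q ^ (2*j+2) ≠ 0 := by
  intro h0
  have h : ‖q ^ (2*j+2)‖ < 1 := by
    rw [norm_pow]; exact pow_lt_one₀ (norm_nonneg q) hq (by omega)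
  have : q ^ (2*j+2) = -1 := by linear_combination h0
  rw [this] at h; simp at h

lemma hasProd_sub (hq : ‖q‖ < 1) :
    HasProd (fun n : ℕ => 1 - q^(2*n+2)) (∏' n : ℕ, (1 - q^(2*n+2)))
      ∧ (∏' n : ℕ, (1 - q^(2*n+2))) ≠ 0 := by
  have := hasProd_aux hq (fun n => -(q^(2*n+2))) (hv_sub hq)
    (fun n => by simpa [sub_eq_add_neg] using one_sub_ne hq n)
  simpa [sub_eq_add_neg] using this

lemma hasProd_add (hq : ‖q‖ < 1) :
    HasProd (fun n : ℕ => 1 + q^(2*n+2)) (∏' n : ℕ, (1 + q^(2*n+2)))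
      ∧ (∏' n : ℕ, (1 + q^(2*n+2))) ≠ 0 :=
  hasProd_aux hq (fun n => q^(2*n+2)) (hv_add hq) (one_add_ne hq)

lemma tendsto_D (hq : ‖q‖ < 1) :
    Tendsto (fun k => D q k) atTop (nhds (∏' n : ℕ, (1 - q^(2*n+2)))) :=
  (hasProd_sub hq).1.tendsto_prod_nat

/-- Uniform bound on the Gaussian binomial coefficients. -/
lemma G_bound (hq : ‖q‖ < 1) : ∃ C : ℝ, 0 < C ∧ ∀ N j : ℕ, ‖G q N j‖ ≤ C := by
  set E : ℝ := ∑' n : ℕ, ‖q‖^(2*n+2) with hE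
  -- upper bound on ‖D q N‖
  have hDle : ∀ N, ‖D q N‖ ≤ Real.exp E := by
    intro N
    rw [D, norm_prod]
    calc ∏ j ∈ Finset.range N, ‖1 - q^(2*j+2)‖
        ≤ ∏ j ∈ Finset.range N, Real.exp (‖q‖^(2*j+2)) := by
          refine Finset.prod_le_prod (fun j _ => norm_nonneg _) (fun j _ => ?_)
          calc ‖1 - q^(2*j+2)‖ ≤ ‖(1:ℂ)‖ + ‖q^(2*j+2)‖ := norm_sub_le _ _
            _ = ‖q‖^(2*j+2) + 1 := by rw [norm_one, norm_pow]; ring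
            _ ≤ Real.exp (‖q‖^(2*j+2)) := Real.add_one_le_exp _
      _ = Real.exp (∑ j ∈ Finset.range N, ‖q‖^(2*j+2)) := (Real.exp_sum _ _).symm
      _ ≤ Real.exp E := by
          apply Real.exp_le_exp.2
          exact Summable.sum_le_tsum _ (fun i _ => by positivity) (geo_summable hq)
  -- lower bound on ‖D q N‖
  obtain ⟨δ, hδpos, hδ⟩ : ∃ δ : ℝ, 0 < δ ∧ ∀ k, δ ≤ ‖D q k‖ := by
    have hL := (tendsto_D hq).norm
    set L := ‖∏' n : ℕ, (1 - q^(2*n+2))‖ with hLdef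
    have hLpos : 0 < L := norm_pos_iff.2 (hasProd_sub hq).2
    obtain ⟨K, hK⟩ := (eventually_atTop).1 (hL.eventually_const_lt (by linarith : L/2 < L))
    set δ₀ := (Finset.range (K+1)).inf' Finset.nonempty_range_add_one (fun k => ‖D q k‖) with hδ₀
    refine ⟨min (L/2) δ₀, ?_, ?_⟩
    · apply lt_min (by linarith)
      rw [hδ₀, Finset.lt_inf'_iff]
      exact fun k _ => norm_pos_iff.2 (D_ne hq k)
    · intro k
      rcases le_or_gt k K with h | h
      · exact le_trans (min_le_right _ _)
          (Finset.inf'_le _ (Finset.mem_range.2 (by omega)))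
      · exact le_trans (min_le_left _ _) (le_of_lt (hK k (by omega)))
  refine ⟨Real.exp E / (δ * δ), by positivity, fun N j => ?_⟩
  rcases le_or_gt j N with h | h
  · rw [G, if_pos h, norm_div, norm_mul]
    apply div_le_div₀ (le_of_lt (by positivity)) (hDle N) (by positivity)
    exact mul_le_mul (hδ j) (hδ (N-j)) (le_of_lt hδpos) (norm_nonneg _)
  · rw [G, if_neg (by omega)]
    rw [norm_zero]
    positivity

lemma zsum_summable (hq : ‖q‖ < 1) (hq0 : q ≠ 0) :
    Summable (fun m : ℤ => ‖q‖ ^ (m*m+m)) := by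
  have h0 : (0:ℝ) < ‖q‖ := norm_pos_iff.2 hq0
  have h1 : ‖q‖ ≤ 1 := le_of_lt hq
  apply Summable.of_nat_of_neg
  · refine Summable.of_nonneg_of_le (fun n => by positivity) (fun n => ?_)
      (summable_geometric_of_lt_one (norm_nonneg q) hq)
    have he : ((n:ℤ)*(n:ℤ)+(n:ℤ)) = ((n*n+n : ℕ) : ℤ) := by push_cast; ring
    rw [he, zpow_natCast]
    exact pow_le_pow_of_le_one (norm_nonneg q) h1 (by nlinarith)
  · refine Summable.of_nonneg_of_le (fun n => by positivity) (fun n => ?_)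
      ((summable_geometric_of_lt_one (norm_nonneg q) hq).mul_left (‖q‖⁻¹))
    have hnn : n ≤ n*n := by nlinarith
    have he : ((-n:ℤ)*(-n:ℤ)+(-n:ℤ)) = ((n*n - n : ℕ) : ℤ) := by
      push_cast [hnn]; ring
    rw [he, zpow_natCast]
    rcases Nat.eq_zero_or_pos n with rfl | hn
    · simp only [Nat.mul_zero, Nat.zero_sub, pow_zero, pow_zero, mul_one]
      nlinarith [mul_inv_cancel₀ (ne_of_gt h0), inv_nonneg.2 (le_of_lt h0)]
    · obtain ⟨m, rfl⟩ : ∃ m, n = m + 1 := ⟨n-1, by omega⟩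
      calc ‖q‖ ^ ((m+1)*(m+1)-(m+1)) ≤ ‖q‖ ^ ((m+1)-1) :=
            pow_le_pow_of_le_one (norm_nonneg q) h1 (by
              have : (m+1)*(m+1)-(m+1) = m*m+m := by
                have : (m+1)*(m+1) = m*m + m + (m+1) := by ring
                omega
              omega)
        _ = ‖q‖⁻¹ * ‖q‖ ^ (m+1) := by
            rw [show (m+1)-1 = m by omega, pow_succ', ← mul_assoc,
              inv_mul_cancel₀ (ne_of_gt h0), one_mul]

/-- The core limit identity: specialization of the Jacobi triple product. -/
theorem sum_eq (hq : ‖q‖ < 1) (hq0 : q ≠ 0) :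
    ∑' m : ℤ, q ^ (m*m+m) =
      2 * (∏' n : ℕ, (1 - q^(2*n+2))) * (∏' n : ℕ, (1 + q^(2*n+2)))^2 := by
  set Pi0 : ℂ := ∏' n : ℕ, (1 - q^(2*n+2)) with hPi0
  set P : ℂ := ∏' n : ℕ, (1 + q^(2*n+2)) with hP
  have hPi0ne : Pi0 ≠ 0 := (hasProd_sub hq).2
  obtain ⟨C, hCpos, hC⟩ := G_bound hq
  set F : ℕ → ℤ → ℂ :=
    fun n m => (if 0 ≤ m + n then G q (2*n) ((m + n).toNat) else 0) * q^(m*m+m) with hF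
  -- each tsum is the finite specialized sum
  have hFsum : ∀ n : ℕ, ∑' m : ℤ, F n m =
      (∏ i ∈ Finset.range n, (1 + q^(2*i))) * (∏ i ∈ Finset.range n, (1 + q^(2*i+2))) := by
    intro n
    rw [tsum_eq_sum (s := Finset.Icc (-(n:ℤ)) n) ?side]
    case side =>
      intro m hm
      rw [Finset.mem_Icc] at hm
      rcases lt_or_ge m (-(n:ℤ)) with h | h
      · rw [hF]
        simp only
        rw [if_neg (by omega), zero_mul]
      · have hgt : (n:ℤ) < m := by omega
        rw [hF]
        simp only
        rw [if_pos (by omega), G_of_gt (by omega : 2*n < (m+n).toNat), zero_mul]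
    rw [← special hq hq0 n]
    refine Finset.sum_nbij' (fun m => (m + n).toNat) (fun j => ((j:ℤ) - n)) ?_ ?_ ?_ ?_ ?_
    · intro m hm; rw [Finset.mem_Icc] at hm; rw [Finset.mem_range]; omega
    · intro j hj; rw [Finset.mem_range] at hj; rw [Finset.mem_Icc]; omega
    · intro m hm; rw [Finset.mem_Icc] at hm; omega
    · intro j hj; rw [Finset.mem_range] at hj; omega
    · intro m hm
      rw [Finset.mem_Icc] at hm
      rw [hF]
      simp only
      rw [if_pos (by omega)]
      have h1 : (((m+n).toNat : ℤ) - n) = m := by omega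
      rw [h1]
      ring_nf
  -- dominated convergence
  have hlim1 : Tendsto (fun n => ∑' m : ℤ, F n m) atTop
      (nhds (∑' m : ℤ, Pi0⁻¹ * q^(m*m+m))) := by
    apply tendsto_tsum_of_dominated_convergence
      (bound := fun m : ℤ => C * ‖q‖^(m*m+m))
      ((zsum_summable hq hq0).mul_left C)
    · intro m
      have hev : ∀ᶠ n : ℕ in atTop, F n m =
          D q (2*n) / (D q ((m+n).toNat) * D q ((n-m).toNat)) * q^(m*m+m) := by
        filter_upwards [eventually_ge_atTop m.natAbs] with n hn
        rw [hF]
        simp only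
        rw [if_pos (by omega), G, if_pos (by omega),
          show 2*n - (m+n).toNat = (n-m).toNat by omega]
      have t1 : Tendsto (fun n : ℕ => D q (2*n)) atTop (nhds Pi0) :=
        (tendsto_D hq).comp (tendsto_atTop_mono (fun n : ℕ => by simp; omega) tendsto_id)
      have t2 : Tendsto (fun n : ℕ => D q ((m+n).toNat)) atTop (nhds Pi0) :=
        (tendsto_D hq).comp (tendsto_atTop.2 fun b => by
          filter_upwards [eventually_ge_atTop (b + m.natAbs)] with n hn
          omega)
      have t3 : Tendsto (fun n : ℕ => D q ((n-m).toNat)) atTop (nhds Pi0) :=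
        (tendsto_D hq).comp (tendsto_atTop.2 fun b => by
          filter_upwards [eventually_ge_atTop (b + m.natAbs)] with n hn
          omega)
      have hmul : (Pi0 * Pi0) ≠ 0 := mul_ne_zero hPi0ne hPi0ne
      have := (t1.div (t2.mul t3) hmul).mul_const (q^(m*m+m))
      rw [show Pi0 / (Pi0 * Pi0) * q^(m*m+m) = Pi0⁻¹ * q^(m*m+m) by
        field_simp] at this
      exact this.congr' (hev.mono fun n h => h.symm)
    · filter_upwards with n
      intro m
      rw [hF]
      simp only
      rw [norm_mul, norm_zpow]
      apply mul_le_mul_of_nonneg_right _ (by positivity)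
      rcases le_or_gt 0 (m + n) with h | h
      · rw [if_pos h]; exact hC _ _
      · rw [if_neg (by omega), norm_zero]; exact le_of_lt hCpos
  have t5 : Tendsto (fun n : ℕ => ∏ i ∈ Finset.range n, (1 + q^(2*i+2))) atTop (nhds P) :=
    (hasProd_add hq).1.tendsto_prod_nat
  have t4 : Tendsto (fun n : ℕ => ∏ i ∈ Finset.range n, (1 + q^(2*i))) atTop (nhds (2*P)) := by
    rw [← Filter.tendsto_add_atTop_iff_nat 1]
    have hfun : (fun n : ℕ => ∏ i ∈ Finset.range (n+1), (1 + q^(2*i)))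
        = fun n : ℕ => 2 * ∏ i ∈ Finset.range n, (1 + q^(2*i+2)) := by
      funext n
      rw [Finset.prod_range_succ' (fun i => 1 + q^(2*i)) n,
        Finset.prod_congr rfl (fun i _ => by rw [show 2*(i+1) = 2*i+2 by ring])]
      norm_num
      ring
    rw [hfun]
    exact t5.const_mul 2
  have hlim2 : Tendsto (fun n => ∑' m : ℤ, F n m) atTop (nhds ((2*P) * P)) := by
    rw [funext hFsum]
    exact t4.mul t5
  have huniq := tendsto_nhds_unique hlim1 hlim2
  rw [tsum_mul_left] at huniq
  have hfin : ∑' m : ℤ, q^(m*m+m) = Pi0 * ((2*P) * P) := by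
    rw [← huniq, ← mul_assoc, mul_inv_cancel₀ hPi0ne, one_mul]
  rw [hfin]
  ring


end limits
end JTPaux

open Complex Real JTPaux

/-- The Dedekind eta function `η(τ) = e^{πiτ/12} ∏_{n≥1} (1 - e^{2πinτ})`. -/
noncomputable def dedekindEta (τ : ℂ) : ℂ :=
  Complex.exp (π * Complex.I * τ / 12) *
    ∏' n : ℕ, (1 - Complex.exp (2 * π * Complex.I * ((n : ℂ) + 1) * τ))

/-- `θ_Δ(τ) = (1/2) ∑_{n ∈ 1/2+ℤ} q^{n²/4}` with `q = e^{2πiτ}`. -/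
noncomputable def thetaTriangle (τ : ℂ) : ℂ :=
  (1 / 2 : ℂ) *
    ∑' n : ℤ, Complex.exp (2 * π * Complex.I * τ * (((n : ℂ) + 1 / 2) ^ 2 / 4))

/-- `θ_Δ(τ) = η(τ)² / η(τ/2)` for `τ` in the upper half-plane. -/
theorem thetaTriangle_eq_eta_quotient (τ : ℂ) (hτ : 0 < τ.im) :
    thetaTriangle τ = dedekindEta τ ^ 2 / dedekindEta (τ / 2) := by
  have hπ := Real.pi_pos
  set q : ℂ := Complex.exp (π * Complex.I * τ / 2) with hqdef
  have hq0 : q ≠ 0 := Complex.exp_ne_zero _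
  have hq : ‖q‖ < 1 := by
    rw [hqdef, Complex.norm_exp]
    have hre : (↑π * Complex.I * τ / 2).re = -(π * τ.im / 2) := by
      simp [Complex.div_re, Complex.mul_re, Complex.mul_im, Complex.I_re, Complex.I_im]
      ring
    rw [hre, ← Real.exp_zero]
    exact Real.exp_lt_exp.2 (by nlinarith)
  set Pi0 : ℂ := ∏' n : ℕ, (1 - q^(2*n+2)) with hPi0
  set P : ℂ := ∏' n : ℕ, (1 + q^(2*n+2)) with hP
  -- LHS
  have hterm : ∀ n : ℤ, Complex.exp (2 * π * Complex.I * τ * (((n : ℂ) + 1 / 2) ^ 2 / 4))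
      = Complex.exp (π * Complex.I * τ / 8) * q ^ (n*n+n) := by
    intro n
    rw [hqdef, ← Complex.exp_int_mul, ← Complex.exp_add]
    congr 1
    push_cast
    ring
  have hLHS : thetaTriangle τ = Complex.exp (π * Complex.I * τ / 8) * (Pi0 * P^2) := by
    rw [thetaTriangle, tsum_congr hterm, tsum_mul_left, sum_eq hq hq0, ← hPi0, ← hP]
    ring
  -- eta at τ
  have hprod1 : (∏' n : ℕ, (1 - Complex.exp (2 * π * Complex.I * ((n : ℂ) + 1) * τ)))
      = Pi0 * P := by
    have h1 : ∀ n : ℕ, (1 - Complex.exp (2 * π * Complex.I * ((n : ℂ) + 1) * τ))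
        = (1 - q^(2*n+2)) * (1 + q^(2*n+2)) := by
      intro n
      have hx : Complex.exp (2 * π * Complex.I * ((n : ℂ) + 1) * τ) = q^(4*n+4) := by
        rw [hqdef, ← Complex.exp_nat_mul]
        congr 1
        push_cast
        ring
      have hy : q^(2*n+2) * q^(2*n+2) = q^(4*n+4) := by
        rw [← pow_add]
        congr 1
        omega
      rw [hx]
      linear_combination -hy
    rw [tprod_congr h1, Multipliable.tprod_mul ((hasProd_sub hq).1.multipliable) ((hasProd_add hq).1.multipliable), ← hPi0, ← hP]
  have hEta : dedekindEta τ = Complex.exp (π * Complex.I * τ / 12) * (Pi0 * P) := by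
    rw [dedekindEta, hprod1]
  -- eta at τ/2
  have hprod2 : (∏' n : ℕ, (1 - Complex.exp (2 * π * Complex.I * ((n : ℂ) + 1) * (τ/2))))
      = Pi0 := by
    rw [hPi0]
    apply tprod_congr
    intro n
    have hx : Complex.exp (2 * π * Complex.I * ((n : ℂ) + 1) * (τ/2)) = q^(2*n+2) := by
      rw [hqdef, ← Complex.exp_nat_mul]
      congr 1
      push_cast
      ring
    rw [hx]
  have hEta2 : dedekindEta (τ/2) = Complex.exp (π * Complex.I * τ / 24) * Pi0 := by
    rw [dedekindEta, hprod2, show (π : ℂ) * Complex.I * (τ/2) / 12 = π * Complex.I * τ / 24 by ring]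
  have hPi0ne : Pi0 ≠ 0 := by rw [hPi0]; exact (hasProd_sub hq).2
  rw [hLHS, hEta, hEta2]
  rw [eq_div_iff (mul_ne_zero (Complex.exp_ne_zero _) hPi0ne)]
  rw [mul_pow, ← Complex.exp_nat_mul]
  rw [show Complex.exp (π * Complex.I * τ / 8) * (Pi0 * P ^ 2) * (Complex.exp (π * Complex.I * τ / 24) * Pi0)
      = (Complex.exp (π * Complex.I * τ / 8) * Complex.exp (π * Complex.I * τ / 24)) * (Pi0^2 * P^2) by ring]
  rw [← Complex.exp_add]
  rw [show (π:ℂ) * Complex.I * τ / 8 + π * Complex.I * τ / 24 = (2:ℕ) * (π * Complex.I * τ / 12) by push_cast; ring]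
  ring
end

section
/- The Dedekind eta function satisfies the half-integer shift identity η(τ + 1/2) = e^{πi/24} η(2τ)³ / (η(τ) η(4τ)) for all τ in the upper half-plane. -/
open Complex Real

namespace EtaAux

noncomputable def P (x : ℂ) : ℂ := ∏' n : ℕ, (1 - x ^ (n + 1))
noncomputable def Q (x : ℂ) : ℂ := ∏' n : ℕ, (1 + x ^ (n + 1))

variable {r : ℝ} {u : ℕ → ℂ}

lemma norm_u_lt (hr0 : 0 ≤ r) (hr : r < 1) (hu : ∀ n, ‖u n‖ ≤ r ^ (n + 1)) (n : ℕ) :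
    ‖u n‖ < 1 :=
  (hu n).trans_lt (pow_lt_one₀ hr0 hr (Nat.succ_ne_zero n))

lemma one_add_ne (hr0 : 0 ≤ r) (hr : r < 1) (hu : ∀ n, ‖u n‖ ≤ r ^ (n + 1)) (n : ℕ) :
    (1 : ℂ) + u n ≠ 0 := by
  intro h
  have h1 : u n = -1 := by linear_combination h
  have := norm_u_lt hr0 hr hu n
  rw [h1] at this
  simp at this

lemma summable_log (hr0 : 0 ≤ r) (hr : r < 1) (hu : ∀ n, ‖u n‖ ≤ r ^ (n + 1)) :
    Summable fun n => Complex.log (1 + u n) := by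
  have hs : Summable fun n : ℕ => (r * (1 - r)⁻¹ / 2 + 1) * r ^ (n + 1) := by
    apply Summable.mul_left
    simpa [pow_succ, mul_comm] using (summable_geometric_of_lt_one hr0 hr).mul_right r
  refine Summable.of_norm_bounded hs fun n => ?_
  have h1 : ‖u n‖ < 1 := norm_u_lt hr0 hr hu n
  have h2 : ‖u n‖ ≤ r := (hu n).trans (pow_le_of_le_one hr0 hr.le (Nat.succ_ne_zero n))
  have h3 : (0:ℝ) < 1 - r := by linarith
  refine (Complex.norm_log_one_add_le h1).trans ?_
  have h4 : (1 - ‖u n‖)⁻¹ ≤ (1 - r)⁻¹ := by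
    apply inv_anti₀ h3
    linarith
  have h5 : ‖u n‖ ^ 2 ≤ r ^ (n+1) * r := by
    rw [sq]
    exact mul_le_mul (hu n) h2 (norm_nonneg _) (pow_nonneg hr0 _)
  have h6 : ‖u n‖ ^ 2 * (1 - ‖u n‖)⁻¹ ≤ r ^ (n+1) * r * (1-r)⁻¹ :=
    mul_le_mul h5 h4 (inv_nonneg.mpr (by linarith)) (by positivity)
  have := hu n
  have hrn : (0:ℝ) ≤ r ^ (n+1) := pow_nonneg hr0 _
  nlinarith [h6]

lemma multipliable_one_add (hr0 : 0 ≤ r) (hr : r < 1) (hu : ∀ n, ‖u n‖ ≤ r ^ (n + 1)) :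
    Multipliable fun n => 1 + u n :=
  Complex.multipliable_of_summable_log (summable_log hr0 hr hu)

lemma tprod_one_add_ne (hr0 : 0 ≤ r) (hr : r < 1) (hu : ∀ n, ‖u n‖ ≤ r ^ (n + 1)) :
    (∏' n, (1 + u n)) ≠ 0 := by
  have := Complex.cexp_tsum_eq_tprod (fun n => one_add_ne hr0 hr hu n) (summable_log hr0 hr hu)
  rw [← this]
  exact Complex.exp_ne_zero _




variable {x : ℂ}


lemma bnd1 (hx : ‖x‖ < 1) (c : ℂ) (hc : ‖c‖ = 1) (n : ℕ) :
    ‖c * x ^ (n + 1)‖ ≤ ‖x‖ ^ (n + 1) := by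
  simp [norm_mul, hc, norm_pow]

lemma bnd2 (hx : ‖x‖ < 1) (c : ℂ) (hc : ‖c‖ = 1) (n : ℕ) :
    ‖c * x ^ (2 * n + 1)‖ ≤ ‖x‖ ^ (n + 1) := by
  rw [norm_mul, hc, one_mul, norm_pow]
  exact pow_le_pow_of_le_one (norm_nonneg _) hx.le (by omega)

lemma mulP (hx : ‖x‖ < 1) : Multipliable fun n : ℕ => 1 - x ^ (n + 1) :=
  (multipliable_one_add (norm_nonneg x) hx (bnd1 hx (-1) (by simp))).congr
    (fun n => by ring)

lemma mulQ (hx : ‖x‖ < 1) : Multipliable fun n : ℕ => 1 + x ^ (n + 1) :=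
  (multipliable_one_add (norm_nonneg x) hx (bnd1 hx 1 (by simp))).congr
    (fun n => by ring)

lemma mulPo (hx : ‖x‖ < 1) : Multipliable fun n : ℕ => 1 - x ^ (2 * n + 1) :=
  (multipliable_one_add (norm_nonneg x) hx (bnd2 hx (-1) (by simp))).congr
    (fun n => by ring)

lemma mulQo (hx : ‖x‖ < 1) : Multipliable fun n : ℕ => 1 + x ^ (2 * n + 1) :=
  (multipliable_one_add (norm_nonneg x) hx (bnd2 hx 1 (by simp))).congr
    (fun n => by ring)

lemma neP (hx : ‖x‖ < 1) : P x ≠ 0 := by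
  have := tprod_one_add_ne (norm_nonneg x) hx (bnd1 hx (-1) (by simp))
  rw [P, tprod_congr (f := fun n : ℕ => 1 - x ^ (n + 1))
    (g := fun n : ℕ => 1 + (-1 : ℂ) * x ^ (n + 1)) fun n => by ring]
  exact this

lemma hx2 (hx : ‖x‖ < 1) : ‖x ^ 2‖ < 1 := by
  rw [norm_pow]; exact pow_lt_one₀ (norm_nonneg x) hx two_ne_zero

lemma hx4 (hx : ‖x‖ < 1) : ‖x ^ 4‖ < 1 := by
  rw [norm_pow]; exact pow_lt_one₀ (norm_nonneg x) hx (by norm_num)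

/-- Even/odd split: `∏(1-x^(2k+1)) * P(x²) = P x`. -/
lemma split_sub (hx : ‖x‖ < 1) :
    (∏' k : ℕ, (1 - x ^ (2 * k + 1))) * P (x ^ 2) = P x := by
  have he : Multipliable fun k : ℕ => 1 - x ^ (2 * k + 1) := mulPo hx
  have ho : Multipliable fun k : ℕ => 1 - x ^ (2 * k + 1 + 1) :=
    (mulP (hx2 hx)).congr fun k => by rw [← pow_mul]; ring_nf
  have h := tprod_even_mul_odd (f := fun n : ℕ => 1 - x ^ (n + 1)) he ho
  rw [P, P, ← h]
  congr 1
  exact tprod_congr fun k => by rw [← pow_mul]; ring_nf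

lemma split_add (hx : ‖x‖ < 1) :
    (∏' k : ℕ, (1 + x ^ (2 * k + 1))) * Q (x ^ 2) = Q x := by
  have he : Multipliable fun k : ℕ => 1 + x ^ (2 * k + 1) := mulQo hx
  have ho : Multipliable fun k : ℕ => 1 + x ^ (2 * k + 1 + 1) :=
    (mulQ (hx2 hx)).congr fun k => by rw [← pow_mul]; ring_nf
  have h := tprod_even_mul_odd (f := fun n : ℕ => 1 + x ^ (n + 1)) he ho
  rw [Q, Q, ← h]
  congr 1
  exact tprod_congr fun k => by rw [← pow_mul]; ring_nf

/-- Termwise: `P x * Q x = P (x²)`. -/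
lemma PQ (hx : ‖x‖ < 1) : P x * Q x = P (x ^ 2) := by
  rw [P, Q, P, ← Multipliable.tprod_mul (mulP hx) (mulQ hx)]
  exact (tprod_congr fun n => by rw [← pow_mul]; ring).symm

lemma key (hx : ‖x‖ < 1) : P (-x) * (P x * P (x ^ 4)) = P (x ^ 2) ^ 3 := by
  have e1 : P (-x) = (∏' k : ℕ, (1 + x ^ (2 * k + 1))) * P (x ^ 2) := by
    have h := split_sub (x := -x) (by simpa using hx)
    rw [show (-x) ^ 2 = x ^ 2 from by ring] at h
    rw [← h]
    congr 1
    exact tprod_congr fun k => by rw [Odd.neg_pow ⟨k, by ring⟩]; ring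
  have e2 := split_add hx
  have e3 := PQ hx
  have e4 : P (x ^ 2) * Q (x ^ 2) = P (x ^ 4) := by
    have := PQ (hx2 hx)
    rwa [← pow_mul] at this
  set Om := ∏' k : ℕ, (1 + x ^ (2 * k + 1))
  linear_combination (P x * P (x ^ 4)) * e1 - Om * P (x ^ 2) * P x * e4 +
    P (x ^ 2) ^ 2 * P x * e2 + P (x ^ 2) ^ 2 * e3


end EtaAux

lemma eta_eq (σ : ℂ) : dedekindEta σ =
    Complex.exp (π * Complex.I * σ / 12) * EtaAux.P (Complex.exp (2 * π * Complex.I * σ)) := by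
  rw [dedekindEta, EtaAux.P]
  congr 1
  refine tprod_congr fun n => ?_
  congr 1
  rw [← Complex.exp_nat_mul]
  congr 1
  push_cast
  ring

/-- Half-integer shift identity: `η(τ + 1/2) = e^{πi/24} η(2τ)³ / (η(τ) η(4τ))`. -/
theorem dedekindEta_half_shift (τ : ℂ) (hτ : 0 < τ.im) :
    dedekindEta (τ + 1 / 2) =
      Complex.exp (π * Complex.I / 24) * dedekindEta (2 * τ) ^ 3 /
        (dedekindEta τ * dedekindEta (4 * τ)) := by
  set q := Complex.exp (2 * π * Complex.I * τ) with hqdef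
  have hq : ‖q‖ < 1 := by
    rw [hqdef, Complex.norm_exp]
    have hre : (2 * (π : ℂ) * Complex.I * τ).re = -(2 * π * τ.im) := by
      simp [Complex.mul_re, Complex.mul_im]
    rw [hre]
    have hπ := Real.pi_pos
    apply Real.exp_lt_one_iff.mpr
    nlinarith
  have h1 : Complex.exp (2 * π * Complex.I * (τ + 1 / 2)) = -q := by
    rw [show 2 * (π : ℂ) * Complex.I * (τ + 1 / 2) = 2 * π * Complex.I * τ + π * Complex.I from
      by ring, Complex.exp_add, Complex.exp_pi_mul_I, hqdef]
    ring
  have h2 : Complex.exp (2 * π * Complex.I * (2 * τ)) = q ^ 2 := by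
    rw [hqdef, ← Complex.exp_nat_mul]
    congr 1
    push_cast
    ring
  have h4 : Complex.exp (2 * π * Complex.I * (4 * τ)) = q ^ 4 := by
    rw [hqdef, ← Complex.exp_nat_mul]
    congr 1
    push_cast
    ring
  set E := Complex.exp (π * Complex.I * τ / 12) with hEdef
  have g1 : Complex.exp (π * Complex.I * (τ + 1 / 2) / 12) =
      E * Complex.exp (π * Complex.I / 24) := by
    rw [hEdef, ← Complex.exp_add]
    congr 1
    ring
  have g2 : Complex.exp (π * Complex.I * (2 * τ) / 12) = E ^ 2 := by
    rw [hEdef, ← Complex.exp_nat_mul]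
    congr 1
    push_cast
    ring
  have g4 : Complex.exp (π * Complex.I * (4 * τ) / 12) = E ^ 4 := by
    rw [hEdef, ← Complex.exp_nat_mul]
    congr 1
    push_cast
    ring
  have hkey := EtaAux.key hq
  have hPq := EtaAux.neP hq
  have hPq4 := EtaAux.neP (EtaAux.hx4 hq)
  have hE : E ≠ 0 := Complex.exp_ne_zero _
  have hc : Complex.exp (π * Complex.I / 24) ≠ 0 := Complex.exp_ne_zero _
  rw [eta_eq (τ + 1 / 2), eta_eq (2 * τ), eta_eq τ, eta_eq (4 * τ), h1, h2, h4, ← hqdef,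
    g1, g2, g4, ← hEdef]
  field_simp
  linear_combination hkey
end

section
/- Let A_m(x) = ∏_{1≤i<j≤m} (x_i² - x_j²) and B_m(x) = ∏_{j=1}^m x_j be polynomials in variables x_1, …, x_m. Then ∑_{j=1}^m ∂²/∂x_j² (A_m(x) B_m(x)) = 0, i.e., the product A_m · B_m is a harmonic polynomial in m variables. -/
open MvPolynomial

section Aux

variable {m : ℕ}


/-- substitution `x_i := q` as an algebra hom. -/
noncomputable def subst (i : Fin m) (q : MvPolynomial (Fin m) ℝ) :
    MvPolynomial (Fin m) ℝ →ₐ[ℝ] MvPolynomial (Fin m) ℝ :=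
  aeval (Function.update X i q)

@[simp] lemma subst_X_same (i : Fin m) (q : MvPolynomial (Fin m) ℝ) :
    subst i q (X i) = q := by simp [subst]

lemma subst_X_ne (i : Fin m) (q : MvPolynomial (Fin m) ℝ) {k : Fin m} (h : k ≠ i) :
    subst i q (X k) = X k := by simp [subst, Function.update_of_ne h]

theorem substDvd (i : Fin m) (q : MvPolynomial (Fin m) ℝ)
    (p : MvPolynomial (Fin m) ℝ) :
    (X i - q) ∣ (p - subst i q p) := by
  induction p using MvPolynomial.induction_on with
  | C a => simp [subst, algebraMap_eq]
  | add p r hp hr =>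
      have : p + r - subst i q (p + r)
          = (p - subst i q p) + (r - subst i q r) := by
        rw [map_add]; ring
      rw [this]; exact dvd_add hp hr
  | mul_X p k hp =>
      have : p * X k - subst i q (p * X k)
          = (p - subst i q p) * X k
            + subst i q p * (X k - subst i q (X k)) := by
        rw [map_mul]; ring
      rw [this]
      refine dvd_add (hp.mul_right _) (Dvd.dvd.mul_left ?_ _)
      rcases eq_or_ne k i with rfl | h
      · simp
      · simp [subst_X_ne i q h]

theorem dvd_of_subst_eq_zero (i : Fin m) (q : MvPolynomial (Fin m) ℝ)
    {p : MvPolynomial (Fin m) ℝ} (h : subst i q p = 0) : (X i - q) ∣ p := by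
  have := substDvd i q p
  rwa [h, sub_zero] at this


theorem prime_X_mv (i : Fin m) : Prime (X i : MvPolynomial (Fin m) ℝ) := by
  cases m with
  | zero => exact absurd i.2 (by omega)
  | succ n =>
      have h0 : Prime (X 0 : MvPolynomial (Fin (n+1)) ℝ) := by
        rw [← MulEquiv.prime_iff (finSuccEquiv ℝ n).toMulEquiv]
        simpa [finSuccEquiv_X_zero] using Polynomial.prime_X
      have := (MulEquiv.prime_iff (renameEquiv ℝ (Equiv.swap 0 i)).toMulEquiv).mpr h0
      simpa using this

/-- the algebra automorphism `X i ↦ X i + c • X j`, fixing other variables. -/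
noncomputable def shear (i j : Fin m) (hij : j ≠ i) (c : ℝ) :
    MvPolynomial (Fin m) ℝ ≃ₐ[ℝ] MvPolynomial (Fin m) ℝ :=
  AlgEquiv.ofAlgHom (aeval (Function.update X i (X i + C c * X j)))
    (aeval (Function.update X i (X i - C c * X j)))
    (by
      apply MvPolynomial.algHom_ext
      intro k
      rcases eq_or_ne k i with rfl | h
      · simp [Function.update_self, Function.update_of_ne hij]
      · simp [Function.update_of_ne h])
    (by
      apply MvPolynomial.algHom_ext
      intro k
      rcases eq_or_ne k i with rfl | h
      · simp [Function.update_self, Function.update_of_ne hij]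
      · simp [Function.update_of_ne h])

lemma shear_X_same (i j : Fin m) (hij : j ≠ i) (c : ℝ) :
    shear i j hij c (X i) = X i + C c * X j := by
  simp [shear]

theorem prime_X_sub_X {i j : Fin m} (h : j ≠ i) :
    Prime (X i - X j : MvPolynomial (Fin m) ℝ) := by
  have := (MulEquiv.prime_iff (shear i j h (-1)).toMulEquiv
    (p := (X i : MvPolynomial (Fin m) ℝ))).mpr (prime_X_mv i)
  change Prime (shear i j h (-1) (X i)) at this
  rw [shear_X_same] at this
  simpa [sub_eq_add_neg] using this

theorem prime_X_add_X {i j : Fin m} (h : j ≠ i) :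
    Prime (X i + X j : MvPolynomial (Fin m) ℝ) := by
  have := (MulEquiv.prime_iff (shear i j h 1).toMulEquiv
    (p := (X i : MvPolynomial (Fin m) ℝ))).mpr (prime_X_mv i)
  change Prime (shear i j h 1 (X i)) at this
  rw [shear_X_same] at this
  simpa using this


lemma not_dvd_of_eval (v : Fin m → ℝ) {p q : MvPolynomial (Fin m) ℝ}
    (hp : eval v p = 0) (hq : eval v q ≠ 0) : ¬ p ∣ q := by
  rintro ⟨c, rfl⟩
  rw [map_mul, hp, zero_mul] at hq
  exact hq rfl

theorem prod_primes_dvd' {ι : Type*} [DecidableEq ι] (s : Finset ι)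
    (f : ι → MvPolynomial (Fin m) ℝ) {Q : MvPolynomial (Fin m) ℝ}
    (h1 : ∀ i ∈ s, Prime (f i)) (h2 : ∀ i ∈ s, f i ∣ Q)
    (h3 : ∀ i ∈ s, ∀ j ∈ s, i ≠ j → ¬ f i ∣ f j) :
    (∏ i ∈ s, f i) ∣ Q := by
  classical
  induction s using Finset.induction generalizing Q with
  | empty => simpa using one_dvd Q
  | insert a s ha ih =>
      obtain ⟨c, rfl⟩ := h2 a (Finset.mem_insert_self a s)
      rw [Finset.prod_insert ha]
      refine mul_dvd_mul_left _ (ih (fun i hi => h1 i (Finset.mem_insert_of_mem hi))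
        (fun i hi => ?_)
        (fun i hi j hj hij => h3 i (Finset.mem_insert_of_mem hi) j
          (Finset.mem_insert_of_mem hj) hij))
      have hia : i ≠ a := by rintro rfl; exact ha hi
      have hpi := h1 i (Finset.mem_insert_of_mem hi)
      rcases hpi.2.2 _ _ (h2 i (Finset.mem_insert_of_mem hi)) with h | h
      · exact absurd h (h3 i (Finset.mem_insert_of_mem hi) a (Finset.mem_insert_self a s) hia)
      · exact h


noncomputable def negv (j : Fin m) : MvPolynomial (Fin m) ℝ →ₐ[ℝ] MvPolynomial (Fin m) ℝ :=
  aeval (Function.update X j (- X j))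

@[simp] lemma negv_X (j k : Fin m) :
    negv j (X k) = if k = j then -X j else X k := by
  rcases eq_or_ne k j with rfl | h
  · simp [negv]
  · simp [negv, Function.update_of_ne h, h]

lemma pderiv_negv (j k : Fin m) (p : MvPolynomial (Fin m) ℝ) :
    pderiv k (negv j p) = (if k = j then (-1 : MvPolynomial (Fin m) ℝ) else 1)
      * negv j (pderiv k p) := by
  induction p using MvPolynomial.induction_on with
  | C a => simp
  | add p q hp hq => rw [map_add, map_add, hp, hq]; simp [mul_add]
  | mul_X p i hp =>
      have hX : pderiv k (negv j (X i))
          = (if k = j then (-1 : MvPolynomial (Fin m) ℝ) else 1) * negv j (pderiv k (X i)) := by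
        rw [pderiv_X, negv_X]
        rcases eq_or_ne i j with rfl | hij
        · rcases eq_or_ne k i with rfl | hki
          · simp [Pi.single_apply]
          · simp [Pi.single_apply, hki, Ne.symm hki]
        · rcases eq_or_ne k j with rfl | hkj
          · simp [Pi.single_apply, hij, Ne.symm hij]
          · simp [Pi.single_apply, hij, hkj]
      rw [map_mul, pderiv_mul, pderiv_mul, map_add, map_mul, map_mul, hp, hX]
      ring
      
lemma pderiv_negv_ne {j k : Fin m} (h : k ≠ j) (p : MvPolynomial (Fin m) ℝ) :
    pderiv k (negv j p) = negv j (pderiv k p) := by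
  rw [pderiv_negv, if_neg h, one_mul]

lemma pderiv_negv_self (j : Fin m) (p : MvPolynomial (Fin m) ℝ) :
    pderiv j (negv j p) = - negv j (pderiv j p) := by
  rw [pderiv_negv, if_pos rfl]; ring

lemma lap_negv (j : Fin m) (p : MvPolynomial (Fin m) ℝ) :
    ∑ k : Fin m, pderiv k (pderiv k (negv j p))
      = negv j (∑ k : Fin m, pderiv k (pderiv k p)) := by
  rw [map_sum]
  refine Finset.sum_congr rfl fun k _ => ?_
  rcases eq_or_ne k j with rfl | h
  · rw [pderiv_negv_self, map_neg, pderiv_negv_self]; ring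
  · rw [pderiv_negv_ne h, pderiv_negv_ne h]

lemma lap_rename (σ : Equiv.Perm (Fin m)) (p : MvPolynomial (Fin m) ℝ) :
    ∑ k : Fin m, pderiv k (pderiv k (rename σ p))
      = rename σ (∑ k : Fin m, pderiv k (pderiv k p)) := by
  rw [map_sum, ← Equiv.sum_comp σ (fun k => pderiv k (pderiv k (rename σ p)))]
  refine Finset.sum_congr rfl fun k _ => ?_
  rw [pderiv_rename σ.injective, pderiv_rename σ.injective]


noncomputable def Apoly (m : ℕ) : MvPolynomial (Fin m) ℝ :=
  ∏ i : Fin m, ∏ j' ∈ Finset.univ.filter (fun j' => i < j'), (X i ^ 2 - X j' ^ 2)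

noncomputable def Bpoly (m : ℕ) : MvPolynomial (Fin m) ℝ :=
  ∏ j' : Fin m, X j'

lemma filter_lt (i : Fin m) :
    Finset.univ.filter (fun j' => i < j') = Finset.Ioi i := by
  ext x; simp

lemma Apoly_eq : Apoly m = ∏ i : Fin m, ∏ j ∈ Finset.Ioi i, (X i ^ 2 - X j ^ 2) := by
  unfold Apoly; simp_rw [filter_lt]

/-- generic: double product over `i < j` of `w i - w j` equals sign constant times
Vandermonde determinant. -/
lemma prod_Ioi_eq_det (w : Fin m → MvPolynomial (Fin m) ℝ) :
    ∏ i : Fin m, ∏ j ∈ Finset.Ioi i, (w i - w j)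
      = (∏ i : Fin m, ∏ _j ∈ Finset.Ioi i, (-1 : MvPolynomial (Fin m) ℝ))
        * (Matrix.vandermonde w).det := by
  rw [Matrix.det_vandermonde, ← Finset.prod_mul_distrib]
  refine Finset.prod_congr rfl fun i _ => ?_
  rw [← Finset.prod_mul_distrib]
  refine Finset.prod_congr rfl fun j _ => ?_
  ring

lemma vandermonde_comp (σ : Equiv.Perm (Fin m)) (w : Fin m → MvPolynomial (Fin m) ℝ) :
    Matrix.vandermonde (w ∘ σ) = (Matrix.vandermonde w).submatrix σ id := by
  ext i j; rfl

lemma rename_swap_Apoly {i j : Fin m} (h : i ≠ j) :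
    rename (Equiv.swap i j) (Apoly m) = - Apoly m := by
  have key : ∀ τ : Equiv.Perm (Fin m),
      rename τ (Apoly m)
        = (∏ a : Fin m, ∏ _b ∈ Finset.Ioi a, (-1 : MvPolynomial (Fin m) ℝ))
          * ((Equiv.Perm.sign τ : ℤ) • (Matrix.vandermonde fun k => (X k ^ 2)).det) := by
    intro τ
    rw [Apoly_eq, map_prod]
    have : ∀ a : Fin m, rename τ (∏ b ∈ Finset.Ioi a, (X a ^ 2 - X b ^ 2 : MvPolynomial (Fin m) ℝ))
        = ∏ b ∈ Finset.Ioi a, ((X (τ a)) ^ 2 - (X (τ b)) ^ 2) := by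
      intro a
      rw [map_prod]
      refine Finset.prod_congr rfl fun b _ => ?_
      simp
    simp_rw [this]
    rw [show (∏ a : Fin m, ∏ b ∈ Finset.Ioi a, ((X (τ a) : MvPolynomial (Fin m) ℝ) ^ 2 - X (τ b) ^ 2))
        = ∏ a : Fin m, ∏ b ∈ Finset.Ioi a, (((fun k => (X k : MvPolynomial (Fin m) ℝ) ^ 2) ∘ τ) a
            - ((fun k => (X k : MvPolynomial (Fin m) ℝ) ^ 2) ∘ τ) b) from rfl]
    rw [prod_Ioi_eq_det, vandermonde_comp, Matrix.det_permute]
    simp [zsmul_eq_mul]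
  have h1 := key (Equiv.swap i j)
  have h2 := key 1
  rw [Equiv.Perm.sign_swap h] at h1
  rw [Equiv.Perm.sign_one] at h2
  simp only [Units.val_neg, Units.val_one, neg_smul, one_smul, mul_neg] at h1 h2 ⊢
  rw [h1]
  have : rename (1 : Equiv.Perm (Fin m)) (Apoly m) = Apoly m := by
    have : ⇑(1 : Equiv.Perm (Fin m)) = id := rfl
    rw [this, rename_id, AlgHom.id_apply]
  rw [this] at h2
  rw [h2]

lemma rename_swap_Bpoly (σ : Equiv.Perm (Fin m)) :
    rename σ (Bpoly m) = Bpoly m := by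
  unfold Bpoly
  rw [map_prod]
  simp_rw [rename_X]
  exact Equiv.prod_comp σ _


@[simp] lemma negv_X_sq (j k : Fin m) : negv j ((X k) ^ 2) = X k ^ 2 := by
  rw [map_pow, negv_X]
  rcases eq_or_ne k j with rfl | h
  · simp
  · simp [h]

lemma negv_Apoly (j : Fin m) : negv j (Apoly m) = Apoly m := by
  unfold Apoly
  rw [map_prod]
  refine Finset.prod_congr rfl fun i _ => ?_
  rw [map_prod]
  refine Finset.prod_congr rfl fun k _ => ?_
  rw [map_sub, negv_X_sq, negv_X_sq]

lemma negv_Bpoly (j : Fin m) : negv j (Bpoly m) = - Bpoly m := by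
  unfold Bpoly
  rw [map_prod]
  simp_rw [negv_X]
  rw [show (∏ k : Fin m, if k = j then (-X j : MvPolynomial (Fin m) ℝ) else X k)
      = ∏ k : Fin m, (if k = j then (-1 : MvPolynomial (Fin m) ℝ) else 1) * X k by
    refine Finset.prod_congr rfl fun k _ => ?_
    rcases eq_or_ne k j with rfl | h
    · simp
    · simp [h]]
  rw [Finset.prod_mul_distrib, Finset.prod_ite_eq' Finset.univ j
    (fun _ => (-1 : MvPolynomial (Fin m) ℝ))]
  simp


lemma isHomogeneous_pderiv {σ : Type*} [DecidableEq σ] {p : MvPolynomial σ ℝ} {n : ℕ}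
    (hp : p.IsHomogeneous n) (i : σ) : (pderiv i p).IsHomogeneous (n - 1) := by
  rw [p.as_sum, map_sum]
  apply MvPolynomial.IsHomogeneous.sum
  intro d hd
  rw [pderiv_monomial]
  by_cases h : d i = 0
  · rw [h]; simpa using isHomogeneous_zero σ ℝ (n-1)
  · apply isHomogeneous_monomial
    have hdn : d.degree = n := by
      have hc : coeff d p ≠ 0 := mem_support_iff.mp hd
      have := hp hc
      rwa [Finsupp.degree_eq_weight_one]
    have hle : Finsupp.single i 1 ≤ d := by
      rw [Finsupp.single_le_iff]
      omega
    have hsum : (d - Finsupp.single i 1) + Finsupp.single i 1 = d := tsub_add_cancel_of_le hle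
    have hadd : ((d - Finsupp.single i 1) + Finsupp.single i 1).degree
        = (d - Finsupp.single i 1).degree + (Finsupp.single i 1).degree := by
      simp [Finsupp.degree_eq_weight_one, map_add]
    have hone : (Finsupp.single i 1 : σ →₀ ℕ).degree = 1 := by
      exact Finsupp.degree_single i 1
    have := congrArg Finsupp.degree hsum
    rw [hadd, hone] at this
    omega

/-- homogeneous polynomials scale: `Ψ p = C p * X^n` where `Ψ` substitutes `X i ↦ C (X i) * X`. -/
lemma aeval_C_mul_X_of_isHomogeneous {σ : Type*} (p : MvPolynomial σ ℝ) (n : ℕ) (hp : p.IsHomogeneous n) :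
    aeval (fun i : σ => Polynomial.C (X i : MvPolynomial σ ℝ) * Polynomial.X) p
      = Polynomial.C p * Polynomial.X ^ n := by
  conv_lhs => rw [p.as_sum]
  rw [map_sum]
  conv_rhs => rw [p.as_sum]
  rw [map_sum (Polynomial.C : MvPolynomial σ ℝ →+* Polynomial (MvPolynomial σ ℝ)), Finset.sum_mul]
  refine Finset.sum_congr rfl fun d hd => ?_
  have hdn : d.degree = n := by
    have hc : coeff d p ≠ 0 := mem_support_iff.mp hd
    have := hp hc
    rwa [Finsupp.degree_eq_weight_one]
  rw [aeval_monomial]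
  have : ∀ i ∈ d.support, (Polynomial.C (X i : MvPolynomial σ ℝ) * Polynomial.X) ^ d i
      = Polynomial.C ((X i : MvPolynomial σ ℝ) ^ d i) * Polynomial.X ^ d i := by
    intro i _
    rw [mul_pow, map_pow]
  rw [Finsupp.prod, Finset.prod_congr rfl this, Finset.prod_mul_distrib, ← map_prod,
    Finset.prod_pow_eq_pow_sum]
  have hdeg : ∑ i ∈ d.support, d i = n := hdn
  rw [hdeg]
  rw [monomial_eq, map_mul, Finsupp.prod]
  rw [show (algebraMap ℝ (Polynomial (MvPolynomial σ ℝ))) (coeff d p)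
      = Polynomial.C (C (coeff d p)) from rfl, show ((C : ℝ →+* MvPolynomial σ ℝ) (coeff d p)) = C (coeff d p) from rfl]
  ring

lemma eq_zero_of_dvd_of_isHomogeneous_lt {σ : Type*} {P Q : MvPolynomial σ ℝ} {N n : ℕ}
    (hP : P.IsHomogeneous N) (hQ : Q.IsHomogeneous n) (h : n < N) (hd : P ∣ Q) :
    Q = 0 := by
  obtain ⟨c, rfl⟩ := hd
  have hPsi := aeval_C_mul_X_of_isHomogeneous (P * c) n hQ
  rw [map_mul, aeval_C_mul_X_of_isHomogeneous P N hP] at hPsi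
  have := congrArg (Polynomial.coeff · n) hPsi
  rw [show Polynomial.C P * Polynomial.X ^ N
        * (aeval fun i : σ => Polynomial.C (X i : MvPolynomial σ ℝ) * Polynomial.X) c
      = (Polynomial.C P
        * (aeval fun i : σ => Polynomial.C (X i : MvPolynomial σ ℝ) * Polynomial.X) c)
        * Polynomial.X ^ N by ring, Polynomial.coeff_mul_X_pow',
    if_neg (by omega : ¬ N ≤ n)] at this
  rw [Polynomial.coeff_C_mul, Polynomial.coeff_X_pow, if_pos rfl, mul_one] at this
  exact this.symm


noncomputable def fprime (x : Fin m ⊕ ((Fin m × Fin m) × Bool)) : MvPolynomial (Fin m) ℝ :=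
  Sum.elim (fun j => X j)
    (fun y => if y.2 then X y.1.1 + X y.1.2 else X y.1.1 - X y.1.2) x

lemma fprime_pairwise {x y : Fin m ⊕ ((Fin m × Fin m) × Bool)}
    (hx : Sum.elim (fun _ => True) (fun y => y.1.1 < y.1.2) x)
    (hy : Sum.elim (fun _ => True) (fun y => y.1.1 < y.1.2) y)
    (hxy : x ≠ y) : ¬ fprime x ∣ fprime y := by
  obtain a | ⟨⟨i, j⟩, b⟩ := x <;> obtain a' | ⟨⟨k, l⟩, c⟩ := y
  · -- X a ∣ X a'
    have hab : a ≠ a' := fun h => hxy (by rw [h])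
    exact not_dvd_of_eval (fun t => if t = a' then 1 else 0)
      (by simp [fprime, hab]) (by simp [fprime])
  · -- X a ∣ X k ± X l
    simp only [Sum.elim_inr] at hy
    have hkl : k ≠ l := ne_of_lt hy
    rcases eq_or_ne a k with rfl | hak
    · refine not_dvd_of_eval (fun t => if t = l then 1 else 0)
        (by simp [fprime, hkl]) ?_
      cases c <;> simp [fprime, hkl, Ne.symm hkl]
    · refine not_dvd_of_eval (fun t => if t = k then 1 else 0)
        (by simp [fprime, hak]) ?_
      cases c <;> simp [fprime, Ne.symm hkl]
  · -- X i ± X j ∣ X a'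
    simp only [Sum.elim_inr] at hx
    have hij : i ≠ j := ne_of_lt hx
    cases b
    · exact not_dvd_of_eval (fun _ => 1) (by simp [fprime]) (by simp [fprime])
    · refine not_dvd_of_eval (fun t => if t = j then (-1 : ℝ) else 1)
        (by simp [fprime, hij]) ?_
      by_cases h : a' = j <;> simp [fprime, h]
  · -- X i ± X j ∣ X k ± X l
    simp only [Sum.elim_inr] at hx hy
    have hij : i ≠ j := ne_of_lt hx
    have hkl : k ≠ l := ne_of_lt hy
    rcases eq_or_ne (i, j) (k, l) with heq | hne
    · obtain ⟨rfl, rfl⟩ := Prod.mk.injEq .. ▸ (by exact Prod.mk.inj heq : i = k ∧ j = l)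
      have hbc : b ≠ c := by
        intro h; exact hxy (by rw [h])
      cases b <;> cases c <;> try exact absurd rfl hbc
      · -- b = false (minus), c = true (plus)
        exact not_dvd_of_eval (fun _ => 1) (by simp [fprime]) (by norm_num [fprime])
      · -- b = true (plus), c = false (minus)
        refine not_dvd_of_eval (fun t => if t = j then (-1 : ℝ) else 1)
          (by simp [fprime, hij]) ?_
        simp [fprime, hij, Ne.symm hij]
    · -- distinct pairs: pick t0 in {k,l} \ {i,j}
      have hpick : (k ≠ i ∧ k ≠ j) ∨ (l ≠ i ∧ l ≠ j) := by
        by_contra hcon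
        push_neg at hcon
        obtain ⟨h1, h2⟩ := hcon
        rcases eq_or_ne k i with hki | hki
        · rcases eq_or_ne l i with hli | hli
          · exact hkl (hli ▸ hki ▸ rfl)
          · have hlj := h2 hli
            exact hne (by rw [hki, hlj])
        · have hkj := h1 hki
          -- k = j, but k < l and i < j ⇒ j < l ⇒ need l vs {i,j}
          rcases eq_or_ne l i with hli | hli
          · -- k = j, l = i : then k < l means j < i, contradiction with i < j
            rw [hkj, hli] at hy
            exact absurd hy (not_lt.mpr (le_of_lt hx))
          · have hlj := h2 hli
            rw [hkj, hlj] at hy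
            exact absurd hy (lt_irrefl j)
      rcases hpick with ⟨h1, h2⟩ | ⟨h1, h2⟩
      · refine not_dvd_of_eval (fun t => if t = k then (1 : ℝ) else 0) ?_ ?_
        · cases b <;> simp [fprime, Ne.symm h1, Ne.symm h2]
        · cases c <;> simp [fprime, Ne.symm hkl]
      · refine not_dvd_of_eval (fun t => if t = l then (1 : ℝ) else 0) ?_ ?_
        · cases b <;> simp [fprime, Ne.symm h1, Ne.symm h2]
        · cases c <;> simp [fprime, hkl]

end Aux

section Main

variable {m : ℕ}

lemma negv_P (j : Fin m) : negv j (Apoly m * Bpoly m) = -(Apoly m * Bpoly m) := by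
  rw [map_mul, negv_Apoly, negv_Bpoly]; ring

lemma swap_P {i j : Fin m} (h : i ≠ j) :
    rename (Equiv.swap i j) (Apoly m * Bpoly m) = -(Apoly m * Bpoly m) := by
  rw [map_mul, rename_swap_Apoly h, rename_swap_Bpoly]; ring

lemma negv_Q (j : Fin m) :
    negv j (∑ k : Fin m, pderiv k (pderiv k (Apoly m * Bpoly m)))
      = -∑ k : Fin m, pderiv k (pderiv k (Apoly m * Bpoly m)) := by
  rw [← lap_negv, negv_P]
  simp [map_neg, ← Finset.sum_neg_distrib]

lemma swap_Q {i j : Fin m} (h : i ≠ j) :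
    rename (Equiv.swap i j) (∑ k : Fin m, pderiv k (pderiv k (Apoly m * Bpoly m)))
      = -∑ k : Fin m, pderiv k (pderiv k (Apoly m * Bpoly m)) := by
  rw [← lap_rename, swap_P h]
  simp [map_neg, ← Finset.sum_neg_distrib]

lemma halve {x : MvPolynomial (Fin m) ℝ} (h : x = -x) : x = 0 := by
  have h2 : (2 : MvPolynomial (Fin m) ℝ) * x = 0 := by linear_combination h
  rcases mul_eq_zero.mp h2 with h' | h'
  · exact absurd h' two_ne_zero
  · exact h'

lemma subst_zero_Q (j : Fin m) :
    subst j 0 (∑ k : Fin m, pderiv k (pderiv k (Apoly m * Bpoly m))) = 0 := by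
  set Q := ∑ k : Fin m, pderiv k (pderiv k (Apoly m * Bpoly m)) with hQdef
  have hcomp : (subst j 0).comp (negv j) = subst j 0 := by
    apply MvPolynomial.algHom_ext
    intro k
    by_cases hkj : k = j
    · subst hkj
      simp
    · simp [subst_X_ne _ _ hkj, hkj]
  apply halve
  conv_lhs => rw [show Q = -negv j Q by rw [negv_Q]; ring]
  rw [map_neg, ← AlgHom.comp_apply, hcomp]

lemma subst_swap_Q {i j : Fin m} (h : i ≠ j) :
    subst i (X j) (∑ k : Fin m, pderiv k (pderiv k (Apoly m * Bpoly m))) = 0 := by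
  set Q := ∑ k : Fin m, pderiv k (pderiv k (Apoly m * Bpoly m)) with hQdef
  have hcomp : (subst i (X j)).comp (rename (Equiv.swap i j))
      = subst i (X j) := by
    apply MvPolynomial.algHom_ext
    intro k
    by_cases hki : k = i
    · subst hki
      simp [Equiv.swap_apply_left, subst_X_ne k (X j) (Ne.symm h)]
    · by_cases hkj : k = j
      · subst hkj
        simp [Equiv.swap_apply_right, subst_X_ne i (X k) hki]
      · simp [Equiv.swap_apply_of_ne_of_ne hki hkj, subst_X_ne i (X j) hki,
          subst_X_ne i (X k) hki]
  apply halve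
  conv_lhs => rw [show Q = -rename (Equiv.swap i j) Q by rw [swap_Q h]; ring]
  rw [map_neg]
  have : subst i (X j) (rename (Equiv.swap i j) Q)
      = ((subst i (X j)).comp (rename (Equiv.swap i j))) Q := rfl
  rw [this, hcomp]

lemma subst_neg_Q {i j : Fin m} (h : i ≠ j) :
    subst i (-X j) (∑ k : Fin m, pderiv k (pderiv k (Apoly m * Bpoly m))) = 0 := by
  set Q := ∑ k : Fin m, pderiv k (pderiv k (Apoly m * Bpoly m)) with hQdef
  have hcomp : (subst i (X j)).comp (negv i) = subst i (-X j) := by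
    apply MvPolynomial.algHom_ext
    intro k
    by_cases hki : k = i
    · subst hki
      simp [subst_X_ne k (X j) (Ne.symm h)]
    · simp [hki, subst_X_ne i (X j) hki, subst_X_ne i (-X j) hki]
  rw [← hcomp, AlgHom.comp_apply, negv_Q, map_neg, subst_swap_Q h, neg_zero]

/-- `A_m(x) B_m(x) = ∏_{i<j} (x_i² - x_j²) · ∏_j x_j` is a harmonic polynomial:
`∑_j ∂²/∂x_j² (A_m B_m) = 0`. -/
theorem laplacian_vandermonde_type_product (m : ℕ) :
    ∑ j : Fin m, pderiv j (pderiv j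
      ((∏ i : Fin m, ∏ j' ∈ Finset.univ.filter (fun j' => i < j'),
          (X i ^ 2 - X j' ^ 2)) *
        ∏ j' : Fin m, (X j' : MvPolynomial (Fin m) ℝ))) = 0 := by
  classical
  rcases Nat.eq_zero_or_pos m with rfl | hm
  · simp
  show ∑ j : Fin m, pderiv j (pderiv j (Apoly m * Bpoly m)) = 0
  set Q := ∑ j : Fin m, pderiv j (pderiv j (Apoly m * Bpoly m)) with hQdef
  -- homogeneity
  have hB : (Bpoly m).IsHomogeneous m := by
    have := MvPolynomial.IsHomogeneous.prod Finset.univ (fun j : Fin m => X j)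
      (fun _ => 1) (fun i _ => isHomogeneous_X ℝ i)
    simpa [Bpoly] using this
  set dA : ℕ := ∑ i : Fin m, ∑ _j ∈ Finset.univ.filter (fun j' => i < j'), 2 with hdA
  have hA : (Apoly m).IsHomogeneous dA := by
    apply MvPolynomial.IsHomogeneous.prod
    intro i _
    apply MvPolynomial.IsHomogeneous.prod
    intro j _
    exact (isHomogeneous_X_pow i 2).sub (isHomogeneous_X_pow j 2)
  set N : ℕ := dA + m with hN
  have hP : (Apoly m * Bpoly m).IsHomogeneous N := hA.mul hB
  have hQhom : Q.IsHomogeneous (N - 1 - 1) := by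
    apply MvPolynomial.IsHomogeneous.sum
    intro j _
    exact isHomogeneous_pderiv (isHomogeneous_pderiv hP j) j
  -- the finset of primes
  set s : Finset (Fin m ⊕ ((Fin m × Fin m) × Bool)) :=
    Finset.univ.disjSum
      ((Finset.univ.filter fun p : Fin m × Fin m => p.1 < p.2) ×ˢ Finset.univ) with hs
  have hmem : ∀ x ∈ s, Sum.elim (fun _ => True) (fun y => y.1.1 < y.1.2) x := by
    intro x hx
    obtain a | ⟨⟨i, j⟩, b⟩ := x
    · simp
    · rw [hs, Finset.inr_mem_disjSum, Finset.mem_product, Finset.mem_filter] at hx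
      exact hx.1.2
  have h1 : ∀ x ∈ s, Prime (fprime x) := by
    intro x hx
    have := hmem x hx
    obtain a | ⟨⟨i, j⟩, b⟩ := x
    · exact prime_X_mv a
    · simp only [Sum.elim_inr] at this
      have hji : j ≠ i := ne_of_gt this
      cases b
      · exact prime_X_sub_X hji
      · exact prime_X_add_X hji
  have h2 : ∀ x ∈ s, fprime x ∣ Q := by
    intro x hx
    have := hmem x hx
    obtain a | ⟨⟨i, j⟩, b⟩ := x
    · have := dvd_of_subst_eq_zero a 0 (subst_zero_Q a)
      rw [sub_zero] at this
      exact this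
    · simp only [Sum.elim_inr] at this
      have hij : i ≠ j := ne_of_lt this
      cases b
      · exact dvd_of_subst_eq_zero i (X j) (subst_swap_Q hij)
      · have := dvd_of_subst_eq_zero i (-X j) (subst_neg_Q hij)
        rw [sub_neg_eq_add] at this
        exact this
  have h3 : ∀ x ∈ s, ∀ y ∈ s, x ≠ y → ¬ fprime x ∣ fprime y := fun x hx y hy hxy =>
    fprime_pairwise (hmem x hx) (hmem y hy) hxy
  have hdvd : (∏ x ∈ s, fprime x) ∣ Q := prod_primes_dvd' s fprime h1 h2 h3
  have hprod : (∏ x ∈ s, fprime x) = Bpoly m * Apoly m := by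
    rw [hs, Finset.prod_disjSum, Finset.prod_product]
    congr 1
    have hbool : ∀ q : Fin m × Fin m,
        (∏ b : Bool, fprime (Sum.inr (q, b)))
          = ((X q.1 : MvPolynomial (Fin m) ℝ) ^ 2 - X q.2 ^ 2) := by
      intro q
      rw [Fintype.prod_bool]
      show ((X q.1 : MvPolynomial (Fin m) ℝ) + X q.2) * (X q.1 - X q.2) = _
      ring
    calc (∏ q ∈ Finset.univ.filter fun p : Fin m × Fin m => p.1 < p.2,
            ∏ b : Bool, fprime (Sum.inr (q, b)))
        = ∏ q ∈ Finset.univ.filter fun p : Fin m × Fin m => p.1 < p.2,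
            ((X q.1 : MvPolynomial (Fin m) ℝ) ^ 2 - X q.2 ^ 2) :=
          Finset.prod_congr rfl fun q _ => hbool q
      _ = ∏ q : Fin m × Fin m,
            if q.1 < q.2 then ((X q.1 : MvPolynomial (Fin m) ℝ) ^ 2 - X q.2 ^ 2) else 1 :=
          Finset.prod_filter _ _
      _ = ∏ i : Fin m, ∏ j : Fin m,
            if i < j then ((X i : MvPolynomial (Fin m) ℝ) ^ 2 - X j ^ 2) else 1 := by
          rw [← Finset.univ_product_univ, Finset.prod_product]
      _ = Apoly m := by
          unfold Apoly
          exact Finset.prod_congr rfl fun i _ => (Finset.prod_filter _ _).symm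
  rw [hprod, show Bpoly m * Apoly m = Apoly m * Bpoly m by ring] at hdvd
  have hNpos : 1 ≤ N := le_trans hm (by omega)
  exact eq_zero_of_dvd_of_isHomogeneous_lt hP hQhom (by omega) hdvd

end Main
end

section
/- The polynomial V_m(x₁,…,x_m,y₁,…,y_m) = ∏_{1≤i<j≤m} (x_i² - x_j²)(y_i² - y_j²) · ∏_{j=1}^m x_j y_j is annihilated by the indefinite Laplacian ∑_{j=1}^m (∂²/∂x_j² - ∂²/∂y_j²). -/
open MvPolynomial

/-- The polynomial `V_m` in variables `x_1,…,x_m` (indexed by `Sum.inl`) and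
`y_1,…,y_m` (indexed by `Sum.inr`):
`V_m = ∏_{i<j} (x_i²-x_j²)(y_i²-y_j²) · ∏_j x_j y_j`. -/
noncomputable def Vm (m : ℕ) : MvPolynomial (Fin m ⊕ Fin m) ℝ :=
  (∏ i : Fin m, ∏ j ∈ Finset.univ.filter (fun j => i < j),
      ((X (Sum.inl i) ^ 2 - X (Sum.inl j) ^ 2) *
        (X (Sum.inr i) ^ 2 - X (Sum.inr j) ^ 2))) *
    ∏ j : Fin m, X (Sum.inl j) * X (Sum.inr j)

/-! ### Auxiliary definitions -/

/-- The one-family analogue `P_m = ∏_{i<j}(x_i²-x_j²) · ∏_j x_j`. -/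
noncomputable def Pm (m : ℕ) : MvPolynomial (Fin m) ℝ :=
  (∏ i : Fin m, ∏ j ∈ Finset.univ.filter (fun j => i < j), (X i ^ 2 - X j ^ 2)) *
    ∏ j : Fin m, X j

/-- The matrix of odd powers whose determinant is `± P_m`. -/
noncomputable def detM (m : ℕ) : MvPolynomial (Fin m) ℝ :=
  Matrix.det (Matrix.of fun i j : Fin m => X i ^ (2 * (j : ℕ) + 1))

/-- Exponent vector of the monomial attached to a permutation. -/
noncomputable def dd {m : ℕ} (σ : Equiv.Perm (Fin m)) : Fin m →₀ ℕ :=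
  Finsupp.equivFunOnFinite.symm fun i => 2 * (σ i : ℕ) + 1

lemma dd_apply {m : ℕ} (σ : Equiv.Perm (Fin m)) (i : Fin m) :
    dd σ i = 2 * (σ i : ℕ) + 1 := rfl

/-- One term of the Laplacian of the Leibniz expansion of the determinant. -/
noncomputable def ff {m : ℕ} (p : Equiv.Perm (Fin m) × Fin m) : MvPolynomial (Fin m) ℝ :=
  Equiv.Perm.sign p.1 •
    monomial (dd p.1 - Finsupp.single p.2 1 - Finsupp.single p.2 1)
      ((dd p.1 p.2 : ℝ) * ((dd p.1 p.2 - 1 : ℕ) : ℝ))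

/-- The sign-reversing involution pairing up the terms `ff`. -/
noncomputable def gg {m : ℕ} (p : Equiv.Perm (Fin m) × Fin m) : Equiv.Perm (Fin m) × Fin m :=
  if h : (p.1 p.2 : ℕ) = 0 then p
  else
    (p.1 * Equiv.swap p.2 (p.1⁻¹ ⟨(p.1 p.2 : ℕ) - 1,
        lt_of_le_of_lt (Nat.sub_le _ _) (p.1 p.2).isLt⟩),
      p.1⁻¹ ⟨(p.1 p.2 : ℕ) - 1, lt_of_le_of_lt (Nat.sub_le _ _) (p.1 p.2).isLt⟩)

lemma ff_zero_of {m : ℕ} (σ : Equiv.Perm (Fin m)) (k : Fin m) (h : (σ k : ℕ) = 0) :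
    ff (σ, k) = 0 := by
  have : ((dd σ k - 1 : ℕ) : ℝ) = 0 := by rw [dd_apply, h]; norm_num
  simp [ff, this]

section main
variable {m : ℕ} (σ : Equiv.Perm (Fin m)) (k : Fin m)

private def kk' : Fin m :=
  σ⁻¹ ⟨(σ k : ℕ) - 1, lt_of_le_of_lt (Nat.sub_le _ _) (σ k).isLt⟩

lemma hσk' : (σ (kk' σ k) : ℕ) = (σ k : ℕ) - 1 := by
  rw [kk']; simp

lemma hkk' (h : ¬ (σ k : ℕ) = 0) : k ≠ kk' σ k := by
  intro he
  have := hσk' σ k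
  rw [← he] at this
  omega

lemma gg_eq (h : ¬ (σ k : ℕ) = 0) : gg (σ, k) = (σ * Equiv.swap k (kk' σ k), kk' σ k) := by
  rw [gg, dif_neg h]; rfl

lemma hσ'k : ((σ * Equiv.swap k (kk' σ k)) k : ℕ) = (σ k : ℕ) - 1 := by
  rw [Equiv.Perm.mul_apply, Equiv.swap_apply_left, hσk']

lemma hσ'k' : (σ * Equiv.swap k (kk' σ k)) (kk' σ k) = σ k := by
  rw [Equiv.Perm.mul_apply, Equiv.swap_apply_right]

lemma ff_add (h : ¬ (σ k : ℕ) = 0) : ff (σ, k) + ff (gg (σ, k)) = 0 := by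
  rw [gg_eq σ k h]
  set k' := kk' σ k with hk'def
  set σ' := σ * Equiv.swap k k' with hσ'def
  have e1 : (σ' k : ℕ) = (σ k : ℕ) - 1 := hσ'k σ k
  have e2 : (σ k' : ℕ) = (σ k : ℕ) - 1 := hσk' σ k
  have e3 : σ' k' = σ k := hσ'k' σ k
  have hkk : k ≠ k' := hkk' σ k h
  have hsign : Equiv.Perm.sign σ' = -Equiv.Perm.sign σ := by
    rw [hσ'def, Equiv.Perm.sign_mul, Equiv.Perm.sign_swap hkk, mul_neg_one]
  have hcoef : dd σ' k' = dd σ k := by rw [dd_apply, dd_apply, e3]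
  have hmono : dd σ' - Finsupp.single k' 1 - Finsupp.single k' 1 =
      dd σ - Finsupp.single k 1 - Finsupp.single k 1 := by
    ext i
    simp only [Finsupp.tsub_apply, Finsupp.single_apply, dd_apply]
    by_cases c2 : i = k
    · subst c2
      rw [if_neg (Ne.symm hkk), if_pos rfl]
      omega
    · by_cases c1 : i = k'
      · subst c1
        rw [if_pos rfl, if_neg hkk]
        have e3' := congrArg Fin.val e3
        omega
      · have hs : σ' i = σ i := by
          rw [hσ'def, Equiv.Perm.mul_apply, Equiv.swap_apply_of_ne_of_ne c2 c1]
        rw [hs, if_neg (fun he => c1 he.symm), if_neg (fun he => c2 he.symm)]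
  show Equiv.Perm.sign σ • _ + Equiv.Perm.sign σ' • _ = 0
  rw [hmono, hcoef, hsign, Units.smul_def, Units.smul_def, Units.val_neg, neg_smul]
  exact add_neg_cancel _

lemma gg_gg (h : ¬ (σ k : ℕ) = 0) : gg (gg (σ, k)) = (σ, k) := by
  rw [gg_eq σ k h]
  set k' := kk' σ k with hk'def
  set σ' := σ * Equiv.swap k k' with hσ'def
  have e1 : (σ' k : ℕ) = (σ k : ℕ) - 1 := hσ'k σ k
  have e3 : σ' k' = σ k := hσ'k' σ k
  have h' : ¬ ((σ' k' : ℕ) = 0) := by rw [e3]; exact h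
  rw [gg_eq σ' k' h']
  have hkey : kk' σ' k' = k := by
    rw [kk']
    have : (⟨(σ' k' : ℕ) - 1, lt_of_le_of_lt (Nat.sub_le _ _) (σ' k').isLt⟩ : Fin m)
        = σ' k := by
      apply Fin.ext
      simp only [e1]
      rw [e3]
    rw [this, Equiv.Perm.inv_def, Equiv.symm_apply_apply]
  rw [hkey, Prod.mk.injEq]
  constructor
  · rw [hσ'def, mul_assoc, Equiv.swap_comm k' k, Equiv.swap_mul_self, mul_one]
  · rfl

end main

lemma sum_ff_zero (m : ℕ) : ∑ p : Equiv.Perm (Fin m) × Fin m, ff p = 0 := by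
  apply Finset.sum_ninvolution gg
  · rintro ⟨σ, k⟩
    by_cases h : (σ k : ℕ) = 0
    · have hg : gg (σ, k) = (σ, k) := by rw [gg, dif_pos h]
      rw [hg, ff_zero_of σ k h, add_zero]
    · exact ff_add σ k h
  · rintro ⟨σ, k⟩ hfa
    by_cases h : (σ k : ℕ) = 0
    · exact absurd (ff_zero_of σ k h) hfa
    · rw [gg_eq σ k h]
      intro he
      exact hkk' σ k h (congrArg Prod.snd he).symm
  · intro a; exact Finset.mem_univ _
  · rintro ⟨σ, k⟩
    by_cases h : (σ k : ℕ) = 0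
    · have hg : gg (σ, k) = (σ, k) := by rw [gg, dif_pos h]
      rw [hg, hg]
    · exact gg_gg σ k h

lemma prod_X_pow_univ {m : ℕ} (f : Fin m → ℕ) :
    (∏ i : Fin m, (X i : MvPolynomial (Fin m) ℝ) ^ f i) =
      monomial (Finsupp.equivFunOnFinite.symm f) 1 := by
  rw [← prod_X_pow_eq_monomial]
  refine (Finset.prod_subset (Finset.subset_univ _) ?_).symm
  intro x _ hx
  have : Finsupp.equivFunOnFinite.symm f x = 0 := by
    simpa using (Finsupp.notMem_support_iff.1 hx)
  simp_all

/-- Leibniz expansion of `detM` into signed monomials. -/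
lemma detM_eq (m : ℕ) :
    detM m = ∑ σ : Equiv.Perm (Fin m), Equiv.Perm.sign σ • monomial (dd σ) (1 : ℝ) := by
  rw [detM, ← Matrix.det_transpose, Matrix.det_apply]
  refine Finset.sum_congr rfl fun σ _ => ?_
  congr 1
  rw [show (∏ i : Fin m, (Matrix.of fun i j : Fin m =>
        (X i : MvPolynomial (Fin m) ℝ) ^ (2 * (j : ℕ) + 1)).transpose (σ i) i) =
      ∏ i : Fin m, (X i : MvPolynomial (Fin m) ℝ) ^ (2 * (σ i : ℕ) + 1) from
    Finset.prod_congr rfl fun i _ => rfl,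
    prod_X_pow_univ fun i => 2 * (σ i : ℕ) + 1]
  rfl

/-- The Laplacian of `detM` expands into the sum of the `ff` terms. -/
lemma lap_expand (m : ℕ) :
    ∑ k : Fin m, pderiv k (pderiv k
        (∑ σ : Equiv.Perm (Fin m), Equiv.Perm.sign σ • monomial (dd σ) (1 : ℝ))) =
      ∑ p : Equiv.Perm (Fin m) × Fin m, ff p := by
  have step : ∀ k : Fin m, pderiv k (pderiv k
      (∑ σ : Equiv.Perm (Fin m), Equiv.Perm.sign σ • monomial (dd σ) (1 : ℝ))) =
      ∑ σ : Equiv.Perm (Fin m), ff (σ, k) := by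
    intro k
    rw [map_sum, map_sum]
    refine Finset.sum_congr rfl fun σ _ => ?_
    rw [Units.smul_def, map_zsmul, map_zsmul, pderiv_monomial, pderiv_monomial]
    show _ = Equiv.Perm.sign σ • _
    rw [Units.smul_def]
    congr 1
    have hc : ((dd σ - Finsupp.single k 1 : Fin m →₀ ℕ)) k = dd σ k - 1 := by
      rw [Finsupp.tsub_apply, Finsupp.single_eq_same]
    rw [hc, one_mul]
  simp only [step]
  rw [Fintype.sum_prod_type, Finset.sum_comm]

/-- `detM` is harmonic. -/
lemma lap_detM (m : ℕ) : ∑ k : Fin m, pderiv k (pderiv k (detM m)) = 0 := by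
  simp only [detM_eq]
  rw [lap_expand, sum_ff_zero]

/-- `detM` in product (Vandermonde) form. -/
lemma detM_prod (m : ℕ) : detM m =
    (∏ i : Fin m, X i) * ∏ i : Fin m, ∏ j ∈ Finset.Ioi i,
      ((X j : MvPolynomial (Fin m) ℝ) ^ 2 - (X i) ^ 2) := by
  rw [detM]
  have : (Matrix.of fun i j : Fin m => (X i : MvPolynomial (Fin m) ℝ) ^ (2 * (j : ℕ) + 1))
      = Matrix.of fun i j : Fin m => (X i : MvPolynomial (Fin m) ℝ) *
          (Matrix.vandermonde fun i => (X i : MvPolynomial (Fin m) ℝ) ^ 2) i j := by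
    ext i j
    simp only [Matrix.vandermonde_apply, Matrix.of_apply]
    ring
  rw [this, Matrix.det_mul_column, Matrix.det_vandermonde]

/-- `Pm` equals a constant times `detM`. -/
lemma Pm_eq (m : ℕ) :
    Pm m = C (∏ i : Fin m, ∏ _j ∈ Finset.Ioi i, (-1 : ℝ)) * detM m := by
  rw [Pm, detM_prod]
  have h1 : (∏ i : Fin m, ∏ j ∈ Finset.univ.filter (fun j => i < j),
      ((X i : MvPolynomial (Fin m) ℝ) ^ 2 - X j ^ 2)) =
      ∏ i : Fin m, ∏ j ∈ Finset.Ioi i, ((X i : MvPolynomial (Fin m) ℝ) ^ 2 - X j ^ 2) := by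
    refine Finset.prod_congr rfl fun i _ => ?_
    rw [Finset.filter_lt_eq_Ioi]
  rw [h1]
  have h2 : (∏ i : Fin m, ∏ j ∈ Finset.Ioi i, ((X i : MvPolynomial (Fin m) ℝ) ^ 2 - X j ^ 2)) =
      (∏ i : Fin m, ∏ _j ∈ Finset.Ioi i, (-1 : MvPolynomial (Fin m) ℝ)) *
        ∏ i : Fin m, ∏ j ∈ Finset.Ioi i, ((X j : MvPolynomial (Fin m) ℝ) ^ 2 - X i ^ 2) := by
    rw [← Finset.prod_mul_distrib]
    refine Finset.prod_congr rfl fun i _ => ?_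
    rw [← Finset.prod_mul_distrib]
    refine Finset.prod_congr rfl fun j _ => ?_
    ring
  have h3 : (∏ i : Fin m, ∏ _j ∈ Finset.Ioi i, (-1 : MvPolynomial (Fin m) ℝ)) =
      C (∏ i : Fin m, ∏ _j ∈ Finset.Ioi i, (-1 : ℝ)) := by
    rw [map_prod]
    refine Finset.prod_congr rfl fun i _ => ?_
    rw [map_prod]
    refine Finset.prod_congr rfl fun j _ => ?_
    simp
  rw [h2, h3]
  ring

/-- `Pm` is harmonic. -/
lemma lap_Pm (m : ℕ) : ∑ k : Fin m, pderiv k (pderiv k (Pm m)) = 0 := by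
  have h : ∀ k : Fin m, pderiv k (pderiv k (Pm m)) =
      C (∏ i : Fin m, ∏ _j ∈ Finset.Ioi i, (-1 : ℝ)) * pderiv k (pderiv k (detM m)) := by
    intro k
    rw [Pm_eq, pderiv_C_mul, pderiv_C_mul]
  simp only [h]
  rw [← Finset.mul_sum, lap_detM, mul_zero]

/-- `Vm` splits as a product of renamed copies of `Pm`. -/
lemma Vm_eq (m : ℕ) :
    Vm m = rename Sum.inl (Pm m) * rename Sum.inr (Pm m) := by
  rw [Vm, Pm]
  simp only [map_mul, map_prod, map_sub, map_pow, rename_X]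
  rw [show (∏ i : Fin m, ∏ j ∈ Finset.univ.filter (fun j => i < j),
      ((X (Sum.inl i) ^ 2 - X (Sum.inl j) ^ 2) *
        (X (Sum.inr i) ^ 2 - X (Sum.inr j) ^ 2) : MvPolynomial (Fin m ⊕ Fin m) ℝ)) =
      (∏ i : Fin m, ∏ j ∈ Finset.univ.filter (fun j => i < j),
        ((X (Sum.inl i) : MvPolynomial (Fin m ⊕ Fin m) ℝ) ^ 2 - X (Sum.inl j) ^ 2)) *
      (∏ i : Fin m, ∏ j ∈ Finset.univ.filter (fun j => i < j),
        ((X (Sum.inr i) : MvPolynomial (Fin m ⊕ Fin m) ℝ) ^ 2 - X (Sum.inr j) ^ 2)) from by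
    rw [← Finset.prod_mul_distrib]
    exact Finset.prod_congr rfl fun i _ => Finset.prod_mul_distrib,
    Finset.prod_mul_distrib]
  ring

lemma pderiv_inl_rename_inr {m : ℕ} (j : Fin m) (q : MvPolynomial (Fin m) ℝ) :
    pderiv (Sum.inl j) (rename (Sum.inr : Fin m → Fin m ⊕ Fin m) q) = 0 := by
  classical
  apply pderiv_eq_zero_of_notMem_vars
  intro hmem
  obtain ⟨i, -, hi⟩ := mem_vars_rename _ _ hmem
  exact Sum.inr_ne_inl hi

lemma pderiv_inr_rename_inl {m : ℕ} (j : Fin m) (q : MvPolynomial (Fin m) ℝ) :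
    pderiv (Sum.inr j) (rename (Sum.inl : Fin m → Fin m ⊕ Fin m) q) = 0 := by
  classical
  apply pderiv_eq_zero_of_notMem_vars
  intro hmem
  obtain ⟨i, -, hi⟩ := mem_vars_rename _ _ hmem
  exact Sum.inl_ne_inr hi

/-- `V_m` is annihilated by the indefinite Laplacian `∑_j (∂²/∂x_j² - ∂²/∂y_j²)`. -/
theorem indefinite_laplacian_Vm (m : ℕ) :
    ∑ j : Fin m,
      (pderiv (Sum.inl j) (pderiv (Sum.inl j) (Vm m)) -
        pderiv (Sum.inr j) (pderiv (Sum.inr j) (Vm m))) = 0 := by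
  have hinl : Function.Injective (Sum.inl : Fin m → Fin m ⊕ Fin m) := Sum.inl_injective
  have hinr : Function.Injective (Sum.inr : Fin m → Fin m ⊕ Fin m) := Sum.inr_injective
  have hL : ∀ j : Fin m, pderiv (Sum.inl j) (pderiv (Sum.inl j) (Vm m)) =
      rename Sum.inl (pderiv j (pderiv j (Pm m))) * rename Sum.inr (Pm m) := by
    intro j
    rw [Vm_eq, pderiv_mul, pderiv_inl_rename_inr, mul_zero, add_zero,
      pderiv_rename hinl, pderiv_mul, pderiv_inl_rename_inr, mul_zero, add_zero,
      pderiv_rename hinl]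
  have hR : ∀ j : Fin m, pderiv (Sum.inr j) (pderiv (Sum.inr j) (Vm m)) =
      rename Sum.inl (Pm m) * rename Sum.inr (pderiv j (pderiv j (Pm m))) := by
    intro j
    rw [Vm_eq, pderiv_mul, pderiv_inr_rename_inl, zero_mul, zero_add,
      pderiv_rename hinr, pderiv_mul, pderiv_inr_rename_inl, zero_mul, zero_add,
      pderiv_rename hinr]
  simp only [hL, hR]
  rw [Finset.sum_sub_distrib, ← Finset.sum_mul, ← Finset.mul_sum,
    ← map_sum, ← map_sum, lap_Pm, map_zero, map_zero, zero_mul, mul_zero, sub_zero]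
end

section
/- For the Weyl vector ρ₀ = ∑_{p=1}^m (m+1-p)ε_p + ∑_{q=1}^m (m+1/2-q)δ_q of the root system Φ₀⁺ of sp(2m)⊕so(2m+1) with pairing (ε_i,ε_i)=1/2=-(δ_j,δ_j) and ε_i, δ_j mutually orthogonal, the product over all positive roots β ∈ Φ₀⁺ of (ρ₀, β) equals (-1)^m 2^{-2m²} (∏_{j=1}^m (2j-1)!)². -/
open Nat

noncomputable def Dm (m : ℕ) : ℚ :=
  ∏ i ∈ Finset.range m, ∏ j ∈ (Finset.range m).filter (fun j => i < j),
        (((((j : ℚ) + 1) - ((i : ℚ) + 1)) / 2) *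
          ((2 * (m : ℚ) + 2 - ((i : ℚ) + 1) - ((j : ℚ) + 1)) / 2) *
          (((((i : ℚ) + 1) - ((j : ℚ) + 1))) / 2) *
          (((((i : ℚ) + 1) + ((j : ℚ) + 1)) - 2 * (m : ℚ) - 1) / 2))

noncomputable def Am (m : ℕ) : ℚ := ∏ p ∈ Finset.range m, ((m : ℚ) + 1 - ((p : ℚ) + 1))

noncomputable def Cm (m : ℕ) : ℚ := ∏ k ∈ Finset.range m, ((2 * ((k : ℚ) + 1) - 2 * (m : ℚ) - 1) / 4)

noncomputable def Em (m : ℕ) : ℚ :=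
  ∏ j ∈ Finset.range m, (((j:ℚ)+1)^2 * (2*(m:ℚ)+1-(j:ℚ)) * (2*(m:ℚ)-(j:ℚ)) / 16)

lemma ascQ (c : ℕ) : ∀ n : ℕ, (∏ j ∈ Finset.range n, ((c : ℚ) + 1 + j)) * (c ! : ℚ) = ((c + n)! : ℚ)
  | 0 => by simp
  | (n+1) => by
      rw [Finset.prod_range_succ, show c + (n+1) = (c+n)+1 from rfl, Nat.factorial_succ]
      push_cast
      linear_combination ((c:ℚ)+1+n) * ascQ c n

lemma descQ (n : ℕ) (c : ℚ) : (∏ j ∈ Finset.range n, (c - j)) = ∏ j ∈ Finset.range n, (c - n + 1 + j) := by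
  induction n with
  | zero => simp
  | succ n ih =>
      rw [Finset.prod_range_succ, ih, Finset.prod_range_succ']
      rw [Finset.prod_congr rfl (fun j _ => by push_cast; ring :
        ∀ j ∈ Finset.range n, (c - (↑(n+1):ℚ) + 1 + (↑(j+1):ℚ)) = (c - ↑n + 1 + ↑j) * 1)]
      push_cast
      ring

lemma prodA (m : ℕ) : ∏ j ∈ Finset.range m, ((j:ℚ)+1) = (m ! : ℚ) := by
  induction m with
  | zero => simp
  | succ m ih => rw [Finset.prod_range_succ, ih, Nat.factorial_succ]; push_cast; ring

lemma prod2m1 (m : ℕ) :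
    (∏ j ∈ Finset.range m, (2*(m:ℚ)+1 - j)) * ((m+1)! : ℚ) = ((2*m+1)! : ℚ) := by
  rw [descQ m (2*(m:ℚ)+1)]
  have h := ascQ (m+1) m
  rw [show m+1+m = 2*m+1 by omega] at h
  rw [Finset.prod_congr rfl (fun j _ => by push_cast; ring :
    ∀ j ∈ Finset.range m, (2*(m:ℚ)+1 - ↑m + 1 + ↑j) = ((↑(m+1):ℚ) + 1 + ↑j))]
  exact h

lemma prod2m (m : ℕ) :
    (∏ j ∈ Finset.range m, (2*(m:ℚ) - j)) * ((m)! : ℚ) = ((2*m)! : ℚ) := by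
  rw [descQ m (2*(m:ℚ))]
  have h := ascQ m m
  rw [show m+m = 2*m by omega] at h
  rw [Finset.prod_congr rfl (fun j _ => by push_cast; ring :
    ∀ j ∈ Finset.range m, (2*(m:ℚ) - ↑m + 1 + ↑j) = ((↑m:ℚ) + 1 + ↑j))]
  exact h

lemma Eval (m : ℕ) :
    (∏ j ∈ Finset.range m, (((j:ℚ)+1)^2 * (2*(m:ℚ)+1-(j:ℚ)) * (2*(m:ℚ)-(j:ℚ)) / 16))
      * ((m+1)! : ℚ) * ((m)! : ℚ) * 16^m
      = ((m)! : ℚ)^2 * ((2*m+1)! : ℚ) * ((2*m)! : ℚ) := by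
  have e : ∀ j ∈ Finset.range m, (((j:ℚ)+1)^2 * (2*(m:ℚ)+1-(j:ℚ)) * (2*(m:ℚ)-(j:ℚ)) / 16)
      = (((j:ℚ)+1)^2) * ((2*(m:ℚ)+1-(j:ℚ)) * ((2*(m:ℚ)-(j:ℚ)) * (16:ℚ)⁻¹)) := fun j _ => by ring
  rw [Finset.prod_congr rfl e, Finset.prod_mul_distrib, Finset.prod_mul_distrib,
    Finset.prod_mul_distrib, Finset.prod_pow, prodA, Finset.prod_const, Finset.card_range]
  have h1 := prod2m1 m
  have h2 := prod2m m
  have h16 : ((16:ℚ)⁻¹)^m * (16:ℚ)^m = 1 := by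
    rw [← mul_pow]; norm_num
  linear_combination (((m)! : ℚ)^2 * ((16:ℚ)⁻¹)^m * 16^m * ((2*m)!:ℚ)) * h1
    + (((m)!:ℚ)^2 * (∏ j ∈ Finset.range m, (2*(m:ℚ)+1 - j)) * ((m+1)!:ℚ) * ((16:ℚ)⁻¹)^m * 16^m) * h2
    + (((m)!:ℚ)^2 * ((2*m+1)!:ℚ) * ((2*m)!:ℚ)) * h16

lemma key (m : ℕ) : Em m * (((m:ℚ)+1) * ((2*(m:ℚ)+1) * (16:ℚ)^m)) = ((2*m+1)! : ℚ)^2 := by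
  have hE := Eval m
  have hfac1 : ((m+1)! : ℚ) = ((m:ℚ)+1) * (m ! : ℚ) := by
    rw [Nat.factorial_succ]; push_cast; ring
  have hfac2 : ((2*m+1)! : ℚ) = (2*(m:ℚ)+1) * ((2*m)! : ℚ) := by
    rw [Nat.factorial_succ]; push_cast; ring
  have hm : (m ! : ℚ) ≠ 0 := Nat.cast_ne_zero.mpr m.factorial_ne_zero
  apply mul_right_cancel₀ (pow_ne_zero 2 hm)
  rw [hfac1] at hE
  show Em m * _ * _ = _
  rw [hfac2]
  unfold Em
  linear_combination (2*(m:ℚ)+1) * hE + (2*(m:ℚ)+1) * ((2*m)! : ℚ) * (m ! :ℚ)^2 * hfac2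

lemma filter_succ_image (m i : ℕ) :
    (Finset.range (m+1)).filter (fun j => i + 1 < j)
      = Finset.image (· + 1) ((Finset.range m).filter (fun j => i < j)) := by
  ext j
  simp only [Finset.mem_filter, Finset.mem_range, Finset.mem_image]
  constructor
  · rintro ⟨h1, h2⟩; exact ⟨j - 1, ⟨by omega, by omega⟩, by omega⟩
  · rintro ⟨a, ⟨ha, hia⟩, rfl⟩; omega

lemma filter_pos_image (m : ℕ) :
    (Finset.range (m+1)).filter (fun j => 0 < j)
      = Finset.image (· + 1) (Finset.range m) := by
  ext j
  simp only [Finset.mem_filter, Finset.mem_range, Finset.mem_image]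
  constructor
  · rintro ⟨h1, h2⟩; exact ⟨j - 1, by omega, by omega⟩
  · rintro ⟨a, ha, rfl⟩; omega

lemma Dstep (m : ℕ) : Dm (m+1) = Dm m * Em m := by
  unfold Dm Em
  rw [Finset.prod_range_succ']
  congr 1
  · apply Finset.prod_congr rfl
    intro i _
    rw [filter_succ_image m i, Finset.prod_image (by intro a _ b _ h; dsimp only at h; omega)]
    apply Finset.prod_congr rfl
    intro j _
    push_cast
    ring
  · rw [filter_pos_image m, Finset.prod_image (by intro a _ b _ h; dsimp only at h; omega)]
    apply Finset.prod_congr rfl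
    intro j _
    push_cast
    ring

lemma Astep (m : ℕ) : Am (m+1) = Am m * ((m:ℚ)+1) := by
  unfold Am
  rw [Finset.prod_range_succ']
  congr 1
  · apply Finset.prod_congr rfl; intro p _; push_cast; ring
  · push_cast; ring

lemma Cstep (m : ℕ) : Cm (m+1) = Cm m * (-(2*(m:ℚ)+1)/4) := by
  unfold Cm
  rw [Finset.prod_range_succ']
  congr 1
  · apply Finset.prod_congr rfl; intro k _; push_cast; ring
  · push_cast; ring

lemma auxmain : ∀ m : ℕ, Dm m * Am m * Cm m
    = (-1:ℚ)^m * (2:ℚ)^(-(2*(m:ℤ)^2)) * (∏ j ∈ Finset.range m, ((2*(j+1)-1)! : ℚ))^2 := by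
  intro m
  induction m with
  | zero => norm_num [Dm, Am, Cm]
  | succ m ih =>
      have hz : (2:ℚ)^(-(2*((m+1:ℕ):ℤ)^2)) = (2:ℚ)^(-(2*(m:ℤ)^2)) * ((16:ℚ)^m * 4)⁻¹ := by
        have h4 : ((16:ℚ)^m * 4) = (2:ℚ)^((4*m+2 : ℕ) : ℤ) := by
          rw [zpow_natCast, pow_add, pow_mul]; norm_num
        rw [h4, ← zpow_neg, ← zpow_add₀ (two_ne_zero)]
        congr 1
        push_cast
        ring
      rw [Dstep, Astep, Cstep, Finset.prod_range_succ, show 2*(m+1)-1 = 2*m+1 by omega, hz]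
      have h16 : ((16:ℚ)^m * 4) ≠ 0 := by positivity
      have hk := key m
      have hzz : (2:ℚ)^(-(2*(m:ℤ)^2)) = ((2:ℚ)^(2*m^2))⁻¹ := by
        rw [← zpow_natCast (2:ℚ) (2*m^2), ← zpow_neg]
        norm_num
      rw [hzz] at ih ⊢
      have h2 : ((2:ℚ)^(2*m^2)) ≠ 0 := by positivity
      have ih2 : Dm m * Am m * Cm m * (2:ℚ)^(2*m^2)
          = (-1:ℚ)^m * (∏ j ∈ Finset.range m, ((2*(j+1)-1)! : ℚ))^2 := by
        rw [ih]; field_simp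
      field_simp
      linear_combination (-(1:ℚ)) * Dm m * Am m * Cm m * (2:ℚ)^(2*m^2) * hk
        + (-(1:ℚ)) * ((2*m+1)! :ℚ)^2 * ih2

/-- The product of `(ρ₀, β)` over all positive roots `β ∈ Φ₀⁺`, written out explicitly,
equals `(-1)^m 2^{-2m²} (∏_{j=1}^m (2j-1)!)²`. -/
theorem weyl_vector_product (m : ℕ) (hm : 0 < m) :
    (∏ i ∈ Finset.range m, ∏ j ∈ (Finset.range m).filter (fun j => i < j),
        (((((j : ℚ) + 1) - ((i : ℚ) + 1)) / 2) *
          ((2 * (m : ℚ) + 2 - ((i : ℚ) + 1) - ((j : ℚ) + 1)) / 2) *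
          (((((i : ℚ) + 1) - ((j : ℚ) + 1))) / 2) *
          (((((i : ℚ) + 1) + ((j : ℚ) + 1)) - 2 * (m : ℚ) - 1) / 2))) *
      (∏ p ∈ Finset.range m, ((m : ℚ) + 1 - ((p : ℚ) + 1))) *
      (∏ k ∈ Finset.range m, ((2 * ((k : ℚ) + 1) - 2 * (m : ℚ) - 1) / 4)) =
    (-1 : ℚ) ^ m * (2 : ℚ) ^ (-(2 * (m : ℤ) ^ 2)) *
      (∏ j ∈ Finset.range m, ((2 * (j + 1) - 1)! : ℚ)) ^ 2 := by
  exact auxmain m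
end

section
/- For every m ≥ 1: ∏_{1≤i<j≤m} (2m+2-i-j)/2 = 2^{-m(m-1)/2} ∏_{i=1}^{m-1} (2i+1)!/(i+1)!. -/
open Nat

lemma aux_prod (n : ℕ) : (∏ t ∈ Finset.range n, (2 * n + 1 - t)) * (n + 1)! = (2 * n + 1)! := by
  have h := Nat.factorial_mul_descFactorial (n := 2 * n + 1) (k := n) (by omega)
  rw [Nat.descFactorial_eq_prod_range] at h
  have h2 : 2 * n + 1 - n = n + 1 := by omega
  rw [h2] at h
  linarith [h]

lemma inner_prod (n : ℕ) :
    ∏ t ∈ Finset.range n, (((2 * n + 1 - t : ℕ) : ℚ) / 2) =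
      (1 / 2 : ℚ) ^ n * (((2 * n + 1)! : ℚ) / ((n + 1)! : ℚ)) := by
  have h : ((∏ t ∈ Finset.range n, (2 * n + 1 - t) : ℕ) : ℚ) * ((n + 1)! : ℚ)
      = ((2 * n + 1)! : ℚ) := by exact_mod_cast congrArg (Nat.cast (R := ℚ)) (aux_prod n)
  have hf : ((n + 1)! : ℚ) ≠ 0 := by
    exact_mod_cast (Nat.factorial_pos (n + 1)).ne'
  rw [Finset.prod_div_distrib, Finset.prod_const, ← Nat.cast_prod]
  field_simp
  rw [Nat.cast_prod] at h
  have hh : (1/2:ℚ)^n * 2^n = 1 := by rw [← mul_pow]; norm_num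
  rw [Finset.card_range, Nat.cast_prod]
  linear_combination h - ((2 * n + 1)! : ℚ) * hh

/-- For every `m ≥ 1`:
`∏_{1≤i<j≤m} (2m+2-i-j)/2 = 2^{-m(m-1)/2} ∏_{i=1}^{m-1} (2i+1)!/(i+1)!`. -/
theorem finite_product_identity (m : ℕ) (hm : 1 ≤ m) :
    ∏ i ∈ Finset.range m, ∏ j ∈ (Finset.range m).filter (fun j => i < j),
        ((2 * (m : ℚ) + 2 - ((i : ℚ) + 1) - ((j : ℚ) + 1)) / 2) =
      (1 / 2 : ℚ) ^ (m * (m - 1) / 2) *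
        ∏ i ∈ Finset.range (m - 1), (((2 * (i + 1) + 1)! : ℚ) / (((i + 1) + 1)! : ℚ)) := by
  have hinner : ∀ i ∈ Finset.range m,
      (∏ j ∈ (Finset.range m).filter (fun j => i < j),
        ((2 * (m : ℚ) + 2 - ((i : ℚ) + 1) - ((j : ℚ) + 1)) / 2))
      = (fun k => (1 / 2 : ℚ) ^ k * (((2 * k + 1)! : ℚ) / ((k + 1)! : ℚ))) (m - 1 - i) := by
    intro i hi
    simp only [Finset.mem_range] at hi
    have hfil : (Finset.range m).filter (fun j => i < j) = Finset.Ico (i + 1) m := by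
      ext j; simp [Finset.mem_Ico]; omega
    rw [hfil, Finset.prod_Ico_eq_prod_range]
    set n := m - 1 - i with hn
    have hmn : m - (i + 1) = n := by omega
    rw [hmn]
    beta_reduce
    rw [← inner_prod n]
    apply Finset.prod_congr rfl
    intro t ht
    simp only [Finset.mem_range] at ht
    congr 1
    have hm' : (m : ℚ) = (n : ℚ) + 1 + (i : ℚ) := by
      exact_mod_cast congrArg (Nat.cast (R := ℚ)) (show m = n + 1 + i by omega)
    push_cast [show t ≤ 2 * n + 1 by omega]
    rw [hm']; ring
  rw [Finset.prod_congr rfl hinner,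
    Finset.prod_range_reflect (fun k => (1 / 2 : ℚ) ^ k * (((2 * k + 1)! : ℚ) / ((k + 1)! : ℚ))) m,
    Finset.prod_mul_distrib, Finset.prod_pow_eq_pow_sum, Finset.sum_range_id]
  obtain ⟨m', rfl⟩ : ∃ m', m = m' + 1 := ⟨m - 1, by omega⟩
  rw [Finset.prod_range_succ']
  simp [Nat.factorial]
end
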